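/- arXiv:2504.19132 — 10 statements merged into one kernel-verified Lean document; each statement's English description precedes it below -/
import Mathlib

section
/- For 0 < s < 1, the function F3(t) = (s^2 t^3 + s^2 t^2 - s t^3 + s t^2 + 2t(1-t)^s - 2(1-t)^s - 2st - 2t + 2)/(1-t)^{s+1} satisfies lim_{t→0+} F3(t) = 0, and consequently F3(t) < 0 for all t in (0,1). -/
open Real Set Filter

lemma key_ineq (s : ℝ) (hs0 : 0 < s) (hs1 : s < 1) {t : ℝ} (ht : t ∈ Ico (0:ℝ) 1) :
    1 - (s+1)*t + (s+1)*s*t^2/2 ≤ (1-t)^(s+1) := by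
  set g : ℝ → ℝ := fun t => (1-t)^(s+1) - (1 - (s+1)*t + (s+1)*s*t^2/2) with hg
  have hmono : MonotoneOn g (Ico (0:ℝ) 1) := by
    have hcont : ContinuousOn g (Ico (0:ℝ) 1) := by
      apply ContinuousOn.sub
      · apply ContinuousOn.rpow_const
        · exact (continuous_const.sub continuous_id).continuousOn
        · intro x hx
          left
          simp only [mem_Ico] at hx
          intro h
          linarith [hx.2, sub_eq_zero.mp h]
      · fun_prop
    have hderiv : ∀ x ∈ interior (Ico (0:ℝ) 1),
        HasDerivAt g ((s+1)*(1 - s*x - (1-x)^s)) x := by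
      intro x hx
      rw [interior_Ico, mem_Ioo] at hx
      have h1x : (0:ℝ) < 1 - x := by linarith
      have h1 : HasDerivAt (fun t : ℝ => (1-t)^(s+1)) (-(s+1)*(1-x)^s) x := by
        have hb : HasDerivAt (fun t : ℝ => 1 - t) (-1) x := by
          simpa using (hasDerivAt_id' x).const_sub (1:ℝ)
        have := (Real.hasDerivAt_rpow_const (p := s+1) (Or.inl h1x.ne')).comp x hb
        refine this.congr_deriv ?_
        rw [show s+1-1 = s from by ring]
        ring
      have h2 : HasDerivAt (fun t : ℝ => 1 - (s+1)*t + (s+1)*s*t^2/2)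
          (0 - (s+1)*1 + (s+1)*s*(2*x^1)/2) x :=
        (((hasDerivAt_const x (1:ℝ)).sub ((hasDerivAt_id x).const_mul (s+1))).add
          (((hasDerivAt_pow 2 x).const_mul ((s+1)*s)).div_const 2))
      have := h1.sub h2
      refine this.congr_deriv ?_
      ring
    apply monotoneOn_of_deriv_nonneg (convex_Ico 0 1) hcont
    · intro x hx
      exact ((hderiv x hx).differentiableAt).differentiableWithinAt
    · intro x hx
      rw [(hderiv x hx).deriv]
      rw [interior_Ico, mem_Ioo] at hx
      have hbern : (1-x)^s ≤ 1 - s*x := by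
        have := rpow_one_add_le_one_add_mul_self (s := -x) (by linarith) hs0.le hs1.le
        simpa [sub_eq_add_neg, mul_comm] using this
      nlinarith [hbern, hs0, hx.1]
  have h0 : g 0 = 0 := by simp [hg]
  have := hmono (show (0:ℝ) ∈ Ico (0:ℝ) 1 by simp) ht ht.1
  rw [h0] at this
  simpa [hg, sub_nonneg] using this

theorem stmt1 (s : ℝ) (hs0 : 0 < s) (hs1 : s < 1) :
    Tendsto (fun t : ℝ =>
        (s^2*t^3 + s^2*t^2 - s*t^3 + s*t^2 + 2*t*(1-t)^s - 2*(1-t)^s - 2*s*t - 2*t + 2)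
          / (1-t)^(s+1)) (nhdsWithin 0 (Ioi 0)) (nhds 0) ∧
    ∀ t ∈ Ioo (0:ℝ) 1,
      (s^2*t^3 + s^2*t^2 - s*t^3 + s*t^2 + 2*t*(1-t)^s - 2*(1-t)^s - 2*s*t - 2*t + 2)
          / (1-t)^(s+1) < 0 := by
  constructor
  · have hc : ContinuousAt (fun t : ℝ =>
        (s^2*t^3 + s^2*t^2 - s*t^3 + s*t^2 + 2*t*(1-t)^s - 2*(1-t)^s - 2*s*t - 2*t + 2)
          / (1-t)^(s+1)) 0 := by
      have hb : ContinuousAt (fun t : ℝ => 1 - t) 0 := by fun_prop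
      have h1 : ContinuousAt (fun t : ℝ => (1-t)^s) 0 :=
        hb.rpow_const (by norm_num)
      have h2 : ContinuousAt (fun t : ℝ => (1-t)^(s+1)) 0 :=
        hb.rpow_const (by norm_num)
      apply ContinuousAt.div _ h2 (by norm_num)
      fun_prop
    have := hc.tendsto.mono_left (nhdsWithin_le_nhds (s := Ioi (0:ℝ)))
    simpa using this
  · intro t ht
    obtain ⟨ht0, ht1⟩ := ht
    have h1t : (0:ℝ) < 1 - t := by linarith
    have hden : (0:ℝ) < (1-t)^(s+1) := Real.rpow_pos_of_pos h1t _
    apply div_neg_of_neg_of_pos _ hden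
    have hsplit : (1-t)^(s+1) = (1-t)^s * (1-t) := by
      rw [Real.rpow_add h1t, Real.rpow_one]
    have hkey := key_ineq s hs0 hs1 (t := t) ⟨ht0.le, ht1⟩
    have h1s : (0:ℝ) < 1 - s := by linarith
    have hcube : 0 < s*(1-s)*t^3 := by positivity
    nlinarith [hkey, hsplit, hcube]
end

section
/- For 0 < s < 1, the function F2(t) = s(1+t) + ((1-t^2)/t)((1-t)^{-s} - 1) is strictly concave on (0,1): its second derivative F2''(t) = (s^2 t^3 + s^2 t^2 - s t^3 + s t^2 + 2t(1-t)^s - 2(1-t)^s - 2st - 2t + 2)/((1-t)^{s+1} t^3) is nonpositive for all t in (0,1). -/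
open Real Set Filter

theorem stmt2 (s : ℝ) (hs0 : 0 < s) (hs1 : s < 1) :
    StrictConcaveOn ℝ (Ioo (0:ℝ) 1)
      (fun t : ℝ => s*(1+t) + ((1-t^2)/t) * ((1-t)^(-s) - 1)) ∧
    ∀ t ∈ Ioo (0:ℝ) 1,
      deriv (deriv (fun t : ℝ => s*(1+t) + ((1-t^2)/t) * ((1-t)^(-s) - 1))) t
        = (s^2*t^3 + s^2*t^2 - s*t^3 + s*t^2 + 2*t*(1-t)^s - 2*(1-t)^s - 2*s*t - 2*t + 2)
            / ((1-t)^(s+1) * t^3) ∧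
      (s^2*t^3 + s^2*t^2 - s*t^3 + s*t^2 + 2*t*(1-t)^s - 2*(1-t)^s - 2*s*t - 2*t + 2)
            / ((1-t)^(s+1) * t^3) ≤ 0 := by
  set f : ℝ → ℝ := fun t : ℝ => s*(1+t) + ((1-t^2)/t) * ((1-t)^(-s) - 1) with hfdef
  set F1 : ℝ → ℝ := fun x : ℝ =>
    s + ((-x^2-1)/x^2) * ((1-x)^(-s)-1) + ((1-x^2)/x) * (s*(1-x)^(-s-1)) with hF1def
  set NN : ℝ → ℝ := fun t : ℝ =>
    s^2*t^3 + s^2*t^2 - s*t^3 + s*t^2 + 2*t*(1-t)^s - 2*(1-t)^s - 2*s*t - 2*t + 2 with hNNdef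
  set N1 : ℝ → ℝ := fun t : ℝ =>
    3*s^2*t^2 + 2*s^2*t - 3*s*t^2 + 2*s*t - 2*s - 2 + 2*(1-t)^s
      + (2*s - 2*s*t)*(1-t)^(s-1) with hN1def
  set N2 : ℝ → ℝ := fun t : ℝ =>
    6*s^2*t + 2*s^2 - 6*s*t + 2*s - 2*s*(s+1)*(1-t)^(s-1) with hN2def
  -- basic derivative of 1 - t
  have hone : ∀ x : ℝ, HasDerivAt (fun t : ℝ => 1 - t) (-1) x := fun x => by
    simpa using (hasDerivAt_id x).const_sub 1
  -- first derivative of f on Ioo 0 1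
  have hdF : ∀ x ∈ Ioo (0:ℝ) 1, HasDerivAt f (F1 x) x := by
    intro x hx
    have hx0 : x ≠ 0 := ne_of_gt hx.1
    have hu : (0:ℝ) < 1 - x := by linarith [hx.2]
    have hg : HasDerivAt (fun t : ℝ => (1-t)^(-s)) ((-1) * (-s) * (1-x)^(-s-1)) x :=
      (hone x).rpow_const (Or.inl (ne_of_gt hu))
    have hnum : HasDerivAt (fun t : ℝ => 1 - t^2) (-((2:ℕ) * x ^ (2-1))) x :=
      (hasDerivAt_pow 2 x).const_sub 1
    have hc : HasDerivAt (fun t : ℝ => (1-t^2)/t)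
        ((-((2:ℕ) * x ^ (2-1)) * x - (1-x^2) * 1) / x^2) x :=
      hnum.div (hasDerivAt_id x) hx0
    have hmain := hc.mul (hg.sub_const 1)
    have haff : HasDerivAt (fun t : ℝ => s*(1+t)) (s*1) x :=
      ((hasDerivAt_id x).const_add 1).const_mul s
    have H : HasDerivAt _ _ x := haff.add hmain
    convert H using 1
    any_goals with_reducible_and_instances rfl
    have h21 : (2:ℕ) - 1 = 1 := rfl
    rw [hF1def]
    field_simp
    ring
  -- second derivative of F1 on Ioo 0 1, in closed form
  have hdF1 : ∀ t ∈ Ioo (0:ℝ) 1, HasDerivAt F1 (NN t / ((1-t)^(s+1) * t^3)) t := by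
    intro t ht
    have ht0 : t ≠ 0 := ne_of_gt ht.1
    have hu : (0:ℝ) < 1 - t := by linarith [ht.2]
    have hune : (1:ℝ) - t ≠ 0 := ne_of_gt hu
    have hg : HasDerivAt (fun x : ℝ => (1-x)^(-s)) ((-1) * (-s) * (1-t)^(-s-1)) t :=
      (hone t).rpow_const (Or.inl hune)
    have hh : HasDerivAt (fun x : ℝ => (1-x)^(-s-1)) ((-1) * (-s-1) * (1-t)^(-s-1-1)) t :=
      (hone t).rpow_const (Or.inl hune)
    have hq : HasDerivAt (fun x : ℝ => (-x^2-1)/x^2)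
        (((-((2:ℕ) * t ^ (2-1))) * t^2 - (-t^2-1) * ((2:ℕ) * t ^ (2-1))) / (t^2)^2) t := by
      have hnum : HasDerivAt (fun x : ℝ => -x^2-1) (-((2:ℕ) * t ^ (2-1))) t :=
        ((hasDerivAt_pow 2 t).neg).sub_const 1
      exact hnum.div (hasDerivAt_pow 2 t) (pow_ne_zero 2 ht0)
    have hcnum : HasDerivAt (fun x : ℝ => 1 - x^2) (-((2:ℕ) * t ^ (2-1))) t :=
      (hasDerivAt_pow 2 t).const_sub 1
    have hc : HasDerivAt (fun x : ℝ => (1-x^2)/x)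
        ((-((2:ℕ) * t ^ (2-1)) * t - (1-t^2) * 1) / t^2) t :=
      hcnum.div (hasDerivAt_id t) ht0
    have H : HasDerivAt _ _ t := ((hq.mul (hg.sub_const 1)).const_add s).add (hc.mul (hh.const_mul s))
    convert H using 1
    any_goals with_reducible_and_instances rfl
    have hA : (0:ℝ) < (1-t)^s := rpow_pos_of_pos hu s
    have e1 : (1-t)^(-s) = ((1-t)^s)⁻¹ := rpow_neg hu.le s
    have e2 : (1-t)^(-s-1) = ((1-t)^s * (1-t))⁻¹ := by
      rw [show -s-1 = -(s+1) by ring, rpow_neg hu.le, rpow_add hu, rpow_one]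
    have e3 : (1-t)^(-s-1-1) = ((1-t)^s * (1-t) * (1-t))⁻¹ := by
      rw [show -s-1-1 = -(s+1+1) by ring, rpow_neg hu.le, rpow_add hu, rpow_add hu, rpow_one]
    have e4 : (1-t)^(s+1) = (1-t)^s * (1-t) := by rw [rpow_add hu, rpow_one]
    rw [hNNdef, e1, e2, e3, e4]
    field_simp
    ring
  -- derivatives of the numerator chain (valid for all x < 1)
  have hdNN : ∀ x ∈ Ico (0:ℝ) 1, HasDerivAt NN (N1 x) x := by
    intro x hx
    have hu : (0:ℝ) < 1 - x := by linarith [hx.2]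
    have hA : HasDerivAt (fun t : ℝ => (1-t)^s) ((-1) * s * (1-x)^(s-1)) x :=
      (hone x).rpow_const (Or.inl (ne_of_gt hu))
    have H : HasDerivAt NN
        (3*s^2*x^2 + 2*s^2*x - 3*s*x^2 + 2*s*x - 2*s - 2
          + (2*((1-x)^s) + (2*x-2) * ((-1) * s * (1-x)^(s-1)))) x := by
      rw [hNNdef]
      have hpoly : HasDerivAt
          (fun t : ℝ => s^2*t^3 + s^2*t^2 - s*t^3 + s*t^2 - 2*s*t - 2*t + 2)
          (3*s^2*x^2 + 2*s^2*x - 3*s*x^2 + 2*s*x - 2*s - 2) x := by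
        have : HasDerivAt _ _ x := ((hasDerivAt_pow 3 x).const_mul (s^2)).add
          (((hasDerivAt_pow 2 x).const_mul (s^2)).add
          (((hasDerivAt_pow 3 x).const_mul (-s)).add
          (((hasDerivAt_pow 2 x).const_mul s).add
          (((hasDerivAt_id x).const_mul (-2*s)).add
          (((hasDerivAt_id x).const_mul (-2)).add (hasDerivAt_const x 2))))))
        convert this using 1
        any_goals with_reducible_and_instances rfl
        all_goals ((try funext t); (try simp only [id_eq, Pi.add_apply, Pi.mul_apply]); first | ring | (push_cast; ring) | (norm_num; ring) | norm_num)
      have hprod : HasDerivAt (fun t : ℝ => (2*t-2) * (1-t)^s)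
          (2 * ((1-x)^s) + (2*x-2) * ((-1) * s * (1-x)^(s-1))) x := by
        have hl : HasDerivAt (fun t : ℝ => 2*t-2) 2 x := by
          simpa using ((hasDerivAt_id x).const_mul 2).sub_const 2
        exact (hl.mul hA).congr_deriv (by ring)
      have : HasDerivAt _ _ x := hpoly.add hprod
      convert this using 1
      any_goals with_reducible_and_instances rfl
      all_goals ((try funext t); (try simp only [id_eq, Pi.add_apply, Pi.mul_apply]); first | ring | (push_cast; ring) | (norm_num; ring) | norm_num)
    convert H using 1
    rw [hN1def]
    ring
  have hdN1 : ∀ x ∈ Ico (0:ℝ) 1, HasDerivAt N1 (N2 x) x := by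
    intro x hx
    have hu : (0:ℝ) < 1 - x := by linarith [hx.2]
    have hune : (1:ℝ) - x ≠ 0 := ne_of_gt hu
    have hA : HasDerivAt (fun t : ℝ => (1-t)^s) ((-1) * s * (1-x)^(s-1)) x :=
      (hone x).rpow_const (Or.inl hune)
    have hB : HasDerivAt (fun t : ℝ => (1-t)^(s-1)) ((-1) * (s-1) * (1-x)^(s-1-1)) x :=
      (hone x).rpow_const (Or.inl hune)
    have hpoly : HasDerivAt
        (fun t : ℝ => 3*s^2*t^2 + 2*s^2*t - 3*s*t^2 + 2*s*t - 2*s - 2)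
        (6*s^2*x + 2*s^2 - 6*s*x + 2*s) x := by
      have : HasDerivAt _ _ x := ((hasDerivAt_pow 2 x).const_mul (3*s^2)).add
        (((hasDerivAt_id x).const_mul (2*s^2)).add
        (((hasDerivAt_pow 2 x).const_mul (-3*s)).add
        (((hasDerivAt_id x).const_mul (2*s)).add (hasDerivAt_const x (-2*s-2)))))
      convert this using 1
      any_goals with_reducible_and_instances rfl
      all_goals ((try funext t); (try simp only [id_eq, Pi.add_apply, Pi.mul_apply]); first | ring | (push_cast; ring) | (norm_num; ring) | norm_num)
    have hl : HasDerivAt (fun t : ℝ => 2*s - 2*s*t) (-(2*s)) x := by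
      simpa using ((hasDerivAt_id x).const_mul (2*s)).const_sub (2*s)
    have H : HasDerivAt _ _ x := (hpoly.add ((hA.const_mul 2).add (hl.mul hB)))
    have HH : HasDerivAt N1
        (6*s^2*x + 2*s^2 - 6*s*x + 2*s
          + (2 * ((-1) * s * (1-x)^(s-1))
            + (-(2*s) * (1-x)^(s-1) + (2*s - 2*s*x) * ((-1) * (s-1) * (1-x)^(s-1-1))))) x := by
      rw [hN1def]
      convert H using 1
      any_goals with_reducible_and_instances rfl
      all_goals ((try funext t); (try simp only [id_eq, Pi.add_apply, Pi.mul_apply]); first | ring | (push_cast; ring) | (norm_num; ring) | norm_num)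
    convert HH using 1
    have eY : (1-x)^(s-1-1) * (1-x) = (1-x)^(s-1) := by
      rw [← rpow_add_one hune (s-1-1)]
      congr 1
      ring
    simp only [hN2def]
    rw [← eY]
    ring
  have hdN2 : ∀ x ∈ Ico (0:ℝ) 1, HasDerivAt N2
      (6*s^2 - 6*s + 2*s*(s+1)*(s-1)*(1-x)^(s-1-1)) x := by
    intro x hx
    have hu : (0:ℝ) < 1 - x := by linarith [hx.2]
    have hB : HasDerivAt (fun t : ℝ => (1-t)^(s-1)) ((-1) * (s-1) * (1-x)^(s-1-1)) x :=
      (hone x).rpow_const (Or.inl (ne_of_gt hu))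
    have hpoly : HasDerivAt (fun t : ℝ => 6*s^2*t + 2*s^2 - 6*s*t + 2*s)
        (6*s^2 - 6*s) x := by
      have : HasDerivAt _ _ x := ((hasDerivAt_id x).const_mul (6*s^2)).add
        (((hasDerivAt_id x).const_mul (-6*s)).add (hasDerivAt_const x (2*s^2+2*s)))
      convert this using 1
      any_goals with_reducible_and_instances rfl
      all_goals ((try funext t); (try simp only [id_eq, Pi.add_apply, Pi.mul_apply]); first | ring | (push_cast; ring) | (norm_num; ring) | norm_num)
    have H : HasDerivAt _ _ x := hpoly.add ((hB.const_mul (2*s*(s+1))).neg)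
    have HH : HasDerivAt N2
        (6*s^2 - 6*s + -(2*s*(s+1) * ((-1) * (s-1) * (1-x)^(s-1-1)))) x := by
      rw [hN2def]
      convert H using 1
      any_goals with_reducible_and_instances rfl
      all_goals ((try funext t); (try simp only [id_eq, Pi.add_apply, Pi.mul_apply]); first | ring | (push_cast; ring) | (norm_num; ring) | norm_num)
    convert HH using 1
    ring
  -- N2 < 0 on Ioo 0 1
  have hN2cont : ContinuousOn N2 (Ico (0:ℝ) 1) := fun x hx =>
    (hdN2 x hx).continuousAt.continuousWithinAt
  have hN2anti : StrictAntiOn N2 (Ico (0:ℝ) 1) := by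
    apply strictAntiOn_of_deriv_neg (convex_Ico 0 1) hN2cont
    intro x hx
    rw [interior_Ico] at hx
    rw [(hdN2 x (Ioo_subset_Ico_self hx)).deriv]
    have hu : (0:ℝ) < 1 - x := by linarith [hx.2]
    have hp : (0:ℝ) < (1-x)^(s-1-1) := rpow_pos_of_pos hu _
    nlinarith [mul_pos (mul_pos hs0 (show (0:ℝ) < s+1 by linarith)) hp]
  have hN2zero : N2 0 = 0 := by
    rw [hN2def]
    norm_num
    ring
  have hN2neg : ∀ x ∈ Ioo (0:ℝ) 1, N2 x < 0 := by
    intro x hx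
    have := hN2anti (show (0:ℝ) ∈ Ico (0:ℝ) 1 by constructor <;> norm_num)
      (Ioo_subset_Ico_self hx) hx.1
    rwa [hN2zero] at this
  -- N1 < 0 on Ioo 0 1
  have hN1anti : StrictAntiOn N1 (Ico (0:ℝ) 1) := by
    apply strictAntiOn_of_deriv_neg (convex_Ico 0 1)
      (fun x hx => (hdN1 x hx).continuousAt.continuousWithinAt)
    intro x hx
    rw [interior_Ico] at hx
    rw [(hdN1 x (Ioo_subset_Ico_self hx)).deriv]
    exact hN2neg x hx
  have hN1zero : N1 0 = 0 := by
    rw [hN1def]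
    norm_num
  have hN1neg : ∀ x ∈ Ioo (0:ℝ) 1, N1 x < 0 := by
    intro x hx
    have := hN1anti (show (0:ℝ) ∈ Ico (0:ℝ) 1 by constructor <;> norm_num)
      (Ioo_subset_Ico_self hx) hx.1
    rwa [hN1zero] at this
  -- NN < 0 on Ioo 0 1
  have hNNanti : StrictAntiOn NN (Ico (0:ℝ) 1) := by
    apply strictAntiOn_of_deriv_neg (convex_Ico 0 1)
      (fun x hx => (hdNN x hx).continuousAt.continuousWithinAt)
    intro x hx
    rw [interior_Ico] at hx
    rw [(hdNN x (Ioo_subset_Ico_self hx)).deriv]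
    exact hN1neg x hx
  have hNNzero : NN 0 = 0 := by
    rw [hNNdef]
    norm_num
  have hNNneg : ∀ x ∈ Ioo (0:ℝ) 1, NN x < 0 := by
    intro x hx
    have := hNNanti (show (0:ℝ) ∈ Ico (0:ℝ) 1 by constructor <;> norm_num)
      (Ioo_subset_Ico_self hx) hx.1
    rwa [hNNzero] at this
  -- second derivative formula
  have hderiv2 : ∀ t ∈ Ioo (0:ℝ) 1,
      deriv (deriv f) t = NN t / ((1-t)^(s+1) * t^3) := by
    intro t ht
    have hev : deriv f =ᶠ[nhds t] F1 := by
      filter_upwards [Ioo_mem_nhds ht.1 ht.2] with x hx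
      exact (hdF x hx).deriv
    rw [hev.deriv_eq]
    exact (hdF1 t ht).deriv
  have hDpos : ∀ t ∈ Ioo (0:ℝ) 1, (0:ℝ) < (1-t)^(s+1) * t^3 := by
    intro t ht
    have hu : (0:ℝ) < 1 - t := by linarith [ht.2]
    exact mul_pos (rpow_pos_of_pos hu _) (pow_pos ht.1 3)
  constructor
  · apply strictConcaveOn_of_deriv2_neg (convex_Ioo 0 1)
      (fun x hx => (hdF x hx).continuousAt.continuousWithinAt)
    intro x hx
    rw [interior_Ioo] at hx
    have h2 : deriv^[2] f x = deriv (deriv f) x := by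
      simp [Function.iterate_succ, Function.iterate_zero, Function.comp]
    rw [h2, hderiv2 x hx]
    exact div_neg_of_neg_of_pos (hNNneg x hx) (hDpos x hx)
  · intro t ht
    refine ⟨hderiv2 t ht, le_of_lt ?_⟩
    exact div_neg_of_neg_of_pos (hNNneg t ht) (hDpos t ht)
end

section
/- For 0 < s < 1, the equation (1-t)^{-s}(s t^2 (1-t)^s + t^2 (1-t)^s + s t^2 + (1-t)^s + s t - t^2 - 1)/t^2 = 0 has a unique root t_s in the interval (0,1). -/
open Real Set

noncomputable def kf (s t : ℝ) : ℝ := (1-t)^(-s)*(1+t^2-s*t-s*t^2) - 1 - (1+s)*t^2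
noncomputable def mf (s t : ℝ) : ℝ := (1-s)*((2+s)-(2-s)*t)*(1-t)^(-s-1) - 2*(1+s)

lemma pow_deriv (p : ℝ) {t : ℝ} (ht : t < 1) :
    HasDerivAt (fun t : ℝ => (1-t)^p) (-(p * (1-t)^(p-1))) t := by
  have h1 : HasDerivAt (fun t : ℝ => 1 - t) (-1) t := by
    exact ((hasDerivAt_const t (1:ℝ)).sub (hasDerivAt_id t)).congr_deriv (by ring)
  have h2 : HasDerivAt (fun x : ℝ => x ^ p) (p * (1-t) ^ (p-1)) (1-t) :=
    Real.hasDerivAt_rpow_const (Or.inl (by linarith))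
  exact (h2.comp t h1).congr_deriv (by ring)

lemma base_split (p : ℝ) {t : ℝ} (ht : t < 1) : (1-t)^p = (1-t) * (1-t)^(p-1) := by
  have h : (0:ℝ) < 1 - t := by linarith
  rw [show p = (p-1)+1 by ring, Real.rpow_add h, Real.rpow_one]
  ring_nf

lemma kf_deriv (s : ℝ) {t : ℝ} (ht : t < 1) : HasDerivAt (kf s) (t * mf s t) t := by
  have hD : HasDerivAt (fun t : ℝ => 1+t^2-s*t-s*t^2) (2*t - s - s*(2*t)) t := by
    have := (((hasDerivAt_const t (1:ℝ)).add (hasDerivAt_pow 2 t)).sub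
      ((hasDerivAt_id t).const_mul s)).sub ((hasDerivAt_pow 2 t).const_mul s)
    exact this.congr_deriv (by norm_num <;> ring)
  have hP := pow_deriv (-s) ht
  have h1 : HasDerivAt (fun t : ℝ => (1-t)^(-s)*(1+t^2-s*t-s*t^2) - 1 - (1+s)*t^2)
      ((-(-s * (1-t)^(-s-1))) * (1+t^2-s*t-s*t^2)
        + (1-t)^(-s) * (2*t - s - s*(2*t)) - (1+s)*(2*t)) t := by
    have := ((hP.mul hD).sub (hasDerivAt_const t (1:ℝ))).sub ((hasDerivAt_pow 2 t).const_mul (1+s))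
    exact this.congr_deriv (by norm_num <;> ring)
  have hkey : (-(-s * (1-t)^(-s-1))) * (1+t^2-s*t-s*t^2)
        + (1-t)^(-s) * (2*t - s - s*(2*t)) - (1+s)*(2*t) = t * mf s t := by
    have hb : (1-t)^(-s) = (1-t) * (1-t)^(-s-1) := by
      simpa using base_split (-s) ht
    rw [hb, mf]
    ring
  rw [← hkey]; exact h1

lemma mf_deriv (s : ℝ) {t : ℝ} (ht : t < 1) :
    HasDerivAt (mf s) ((1-s)*s*((4+s)-(2-s)*t)*(1-t)^(-s-2)) t := by
  have hA : HasDerivAt (fun t : ℝ => (1-s)*((2+s)-(2-s)*t)) (-((1-s)*(2-s))) t := by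
    have := ((hasDerivAt_const t (2+s)).sub ((hasDerivAt_id t).const_mul (2-s))).const_mul (1-s)
    exact this.congr_deriv (by ring)
  have hP := pow_deriv (-s-1) ht
  have h1 : HasDerivAt (fun t : ℝ => (1-s)*((2+s)-(2-s)*t)*(1-t)^(-s-1) - 2*(1+s))
      ((-((1-s)*(2-s))) * (1-t)^(-s-1)
        + (1-s)*((2+s)-(2-s)*t) * (-((-s-1) * (1-t)^(-s-1-1)))) t := by
    have := (hA.mul hP).sub (hasDerivAt_const t (2*(1+s)))
    exact this.congr_deriv (by ring)
  have hkey : (-((1-s)*(2-s))) * (1-t)^(-s-1)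
        + (1-s)*((2+s)-(2-s)*t) * (-((-s-1) * (1-t)^(-s-1-1)))
      = (1-s)*s*((4+s)-(2-s)*t)*(1-t)^(-s-2) := by
    have hb : (1-t)^(-s-1) = (1-t) * (1-t)^(-s-1-1) := by
      simpa using base_split (-s-1) ht
    rw [hb, show (-s-1-1 : ℝ) = -s-2 by ring]
    ring
  rw [← hkey]; exact h1

lemma mf_cont (s : ℝ) : ContinuousOn (mf s) (Iio 1) :=
  fun x hx => ((mf_deriv s hx).differentiableAt.continuousAt).continuousWithinAt

lemma kf_cont (s : ℝ) : ContinuousOn (kf s) (Iio 1) :=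
  fun x hx => ((kf_deriv s hx).differentiableAt.continuousAt).continuousWithinAt

lemma mf_mono (s : ℝ) (hs0 : 0 < s) (hs1 : s < 1) : StrictMonoOn (mf s) (Iio 1) := by
  apply strictMonoOn_of_deriv_pos (convex_Iio 1) (mf_cont s)
  intro x hx
  rw [interior_Iio] at hx
  have hx' : x < 1 := hx
  rw [(mf_deriv s hx).deriv]
  have h1 : (0:ℝ) < (1-x)^(-s-2) := Real.rpow_pos_of_pos (by linarith) _
  have h2 : (0:ℝ) < (4+s)-(2-s)*x := by nlinarith
  have h3 : (0:ℝ) < (1-s)*s := by nlinarith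
  exact mul_pos (mul_pos h3 h2) h1

lemma mf_zero (s : ℝ) (hs0 : 0 < s) (hs1 : s < 1) : mf s 0 < 0 := by
  simp only [mf, mul_zero, sub_zero, Real.one_rpow]
  nlinarith

lemma kf_zero (s : ℝ) : kf s 0 = 0 := by
  simp [kf]

lemma mf_pos_near_one (s : ℝ) (hs0 : 0 < s) (hs1 : s < 1) :
    0 < mf s (1 - s*(1-s)/(2*(1+s))) := by
  set ε : ℝ := s*(1-s)/(2*(1+s)) with hε
  have hd : (0:ℝ) < 2*(1+s) := by nlinarith
  have hn : (0:ℝ) < s*(1-s) := by nlinarith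
  have hε0 : 0 < ε := div_pos hn hd
  have hε1 : ε < 1 := by
    rw [hε, div_lt_one hd]; nlinarith
  have h1 : (1:ℝ) - (1 - ε) = ε := by ring
  have hpow : ε⁻¹ ≤ ε^(-s-1) := by
    have := Real.rpow_le_rpow_of_exponent_ge hε0 (le_of_lt hε1)
      (show -s-1 ≤ -1 by linarith)
    rwa [Real.rpow_neg_one] at this
  have hpow0 : (0:ℝ) < ε⁻¹ := inv_pos.mpr hε0
  have hεinv : s*(1-s)*ε⁻¹ = 2*(1+s) := by
    rw [hε, inv_div, mul_comm (s*(1-s))]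
    exact div_mul_cancel₀ _ (ne_of_gt hn)
  have hC : 2*s ≤ (2+s)-(2-s)*(1-ε) := by nlinarith
  simp only [mf, h1]
  have key : (1-s)*(2*s)*ε⁻¹ ≤ (1-s)*((2+s)-(2-s)*(1-ε))*ε^(-s-1) := by
    apply mul_le_mul (by nlinarith) hpow (le_of_lt hpow0) (by nlinarith)
  nlinarith

lemma kf_pos_near_one (s : ℝ) (hs0 : 0 < s) (hs1 : s < 1) :
    0 < kf s (1 - (1/2)*((1-s)/(2+s))^(1/s)) := by
  set B : ℝ := (1-s)/(2+s) with hB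
  have hB0 : 0 < B := div_pos (by linarith) (by linarith)
  have hB1 : B < 1 := by
    rw [hB, div_lt_one (by linarith)]; linarith
  set δ : ℝ := (1/2)*B^(1/s) with hδ
  have hBp0 : 0 < B^(1/s) := Real.rpow_pos_of_pos hB0 _
  have hBp1 : B^(1/s) ≤ 1 := Real.rpow_le_one (le_of_lt hB0) (le_of_lt hB1) (by positivity)
  have hδ0 : 0 < δ := by rw [hδ]; positivity
  have hδ1 : δ < 1 := by rw [hδ]; nlinarith
  set t : ℝ := 1 - δ with htdef
  have ht0 : 0 < t := by rw [htdef]; linarith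
  have ht1 : t < 1 := by rw [htdef]; linarith
  have h1 : (1:ℝ) - t = δ := by rw [htdef]; ring
  -- δ^s < B
  have hδs : δ^s < B := by
    rw [hδ, Real.mul_rpow (by norm_num) (le_of_lt hBp0)]
    have e1 : (B^(1/s))^s = B := by
      rw [← Real.rpow_mul (le_of_lt hB0), one_div, inv_mul_cancel₀ (ne_of_gt hs0),
        Real.rpow_one]
    rw [e1]
    have h2 : ((1:ℝ)/2)^s < 1 :=
      Real.rpow_lt_one (by norm_num) (by norm_num) hs0
    have h3 : (0:ℝ) < ((1:ℝ)/2)^s := Real.rpow_pos_of_pos (by norm_num) _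
    nlinarith
  -- hence (2+s)/(1-s) < δ^(-s)
  have hδs0 : (0:ℝ) < δ^s := Real.rpow_pos_of_pos hδ0 _
  have hA : (2+s)/(1-s) < δ^(-s) := by
    rw [Real.rpow_neg (le_of_lt hδ0)]
    have h := inv_strictAnti₀ hδs0 hδs
    rwa [hB, inv_div] at h
  have hApos : (0:ℝ) < δ^(-s) := Real.rpow_pos_of_pos hδ0 _
  have hD : 1 - s ≤ 1+t^2-s*t-s*t^2 := by nlinarith
  have h5 : 2+s < δ^(-s)*(1-s) := by
    rw [div_lt_iff₀ (by linarith : (0:ℝ) < 1-s)] at hA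
    linarith
  have h6 : δ^(-s)*(1-s) ≤ δ^(-s)*(1+t^2-s*t-s*t^2) :=
    mul_le_mul_of_nonneg_left hD (le_of_lt hApos)
  simp only [kf, h1]
  nlinarith

theorem stmt4 (s : ℝ) (hs0 : 0 < s) (hs1 : s < 1) :
    ∃! t : ℝ, t ∈ Ioo (0:ℝ) 1 ∧
      (1-t)^(-s) * (s*t^2*(1-t)^s + t^2*(1-t)^s + s*t^2 + (1-t)^s + s*t - t^2 - 1) / t^2 = 0 := by
  have hmono := mf_mono s hs0 hs1
  -- t₁ where mf is positive
  set t₁ : ℝ := 1 - s*(1-s)/(2*(1+s)) with ht₁def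
  have hε0 : 0 < s*(1-s)/(2*(1+s)) := div_pos (by nlinarith) (by nlinarith)
  have hε1 : s*(1-s)/(2*(1+s)) < 1 := by
    rw [div_lt_one (by nlinarith)]; nlinarith
  have ht₁0 : 0 < t₁ := by rw [ht₁def]; linarith
  have ht₁1 : t₁ < 1 := by rw [ht₁def]; linarith
  have hm0 := mf_zero s hs0 hs1
  have hm1 := mf_pos_near_one s hs0 hs1
  have hsub1 : Icc (0:ℝ) t₁ ⊆ Iio 1 := fun x hx => lt_of_le_of_lt hx.2 ht₁1
  obtain ⟨t₀, ht₀mem, ht₀⟩ := intermediate_value_Icc (le_of_lt ht₁0)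
    ((mf_cont s).mono hsub1) ⟨le_of_lt hm0, le_of_lt hm1⟩
  have ht₀1 : t₀ < 1 := lt_of_le_of_lt ht₀mem.2 ht₁1
  have ht₀0 : 0 < t₀ := by
    rcases lt_or_eq_of_le ht₀mem.1 with h | h
    · exact h
    · rw [← h] at ht₀; linarith
  -- sign of mf
  have hmneg : ∀ x, 0 ≤ x → x < t₀ → mf s x < 0 := by
    intro x hx0 hx
    have := hmono (show x ∈ Iio 1 by exact lt_trans hx ht₀1) (show t₀ ∈ Iio 1 from ht₀1) hx
    linarith [this]
  have hmpos : ∀ x, t₀ < x → x < 1 → 0 < mf s x := by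
    intro x hx hx1
    have := hmono (show t₀ ∈ Iio 1 from ht₀1) (show x ∈ Iio 1 from hx1) hx
    linarith [this]
  -- kf strictly decreasing on [0, t₀]
  have hanti : StrictAntiOn (kf s) (Icc 0 t₀) := by
    apply strictAntiOn_of_deriv_neg (convex_Icc 0 t₀)
      ((kf_cont s).mono (fun x hx => lt_of_le_of_lt hx.2 ht₀1))
    intro x hx
    rw [interior_Icc] at hx
    rw [(kf_deriv s (lt_trans hx.2 ht₀1)).deriv]
    exact mul_neg_of_pos_of_neg hx.1 (hmneg x (le_of_lt hx.1) hx.2)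
  have hkneg : ∀ x, 0 < x → x ≤ t₀ → kf s x < 0 := by
    intro x h1 h2
    have := hanti (left_mem_Icc.mpr (le_of_lt ht₀0)) ⟨le_of_lt h1, h2⟩ h1
    rw [kf_zero] at this
    exact this
  -- kf strictly increasing on [t₀, 1)
  have hmonoK : StrictMonoOn (kf s) (Ico t₀ 1) := by
    apply strictMonoOn_of_deriv_pos (convex_Ico t₀ 1)
      ((kf_cont s).mono (fun x hx => hx.2))
    intro x hx
    rw [interior_Ico] at hx
    rw [(kf_deriv s hx.2).deriv]
    exact mul_pos (lt_trans ht₀0 hx.1) (hmpos x hx.1 hx.2)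
  -- t₂ where kf is positive
  set t₂ : ℝ := 1 - (1/2)*((1-s)/(2+s))^(1/s) with ht₂def
  have hB0 : (0:ℝ) < (1-s)/(2+s) := div_pos (by linarith) (by linarith)
  have hBp0 : 0 < ((1-s)/(2+s))^(1/s) := Real.rpow_pos_of_pos hB0 _
  have hBp1 : ((1-s)/(2+s))^(1/s) ≤ 1 := Real.rpow_le_one (le_of_lt hB0)
    (by rw [div_le_one (by linarith)]; linarith) (by positivity)
  have ht₂0 : 0 < t₂ := by rw [ht₂def]; nlinarith
  have ht₂1 : t₂ < 1 := by rw [ht₂def]; nlinarith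
  have hkt₂ : 0 < kf s t₂ := kf_pos_near_one s hs0 hs1
  have ht₀t₂ : t₀ < t₂ := by
    by_contra h
    push_neg at h
    linarith [hkneg t₂ ht₂0 h]
  -- IVT for kf on [t₀, t₂]
  have hkt₀ : kf s t₀ < 0 := hkneg t₀ ht₀0 le_rfl
  obtain ⟨r, hrmem, hr⟩ := intermediate_value_Icc (le_of_lt ht₀t₂)
    ((kf_cont s).mono (fun x hx => lt_of_le_of_lt hx.2 ht₂1))
    ⟨le_of_lt hkt₀, le_of_lt hkt₂⟩
  have hrt₀ : t₀ < r := by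
    rcases lt_or_eq_of_le hrmem.1 with h | h
    · exact h
    · rw [← h] at hr; linarith
  have hr1 : r < 1 := lt_of_le_of_lt hrmem.2 ht₂1
  have hr0 : 0 < r := lt_trans ht₀0 hrt₀
  -- equivalence of the equation with kf = 0
  have hequiv : ∀ t ∈ Ioo (0:ℝ) 1,
      ((1-t)^(-s) * (s*t^2*(1-t)^s + t^2*(1-t)^s + s*t^2 + (1-t)^s + s*t - t^2 - 1) / t^2 = 0
        ↔ kf s t = 0) := by
    intro t ht
    have h0 : (0:ℝ) < 1-t := by linarith [ht.2]
    have hPQ : (1-t)^(-s) * (1-t)^s = 1 := by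
      rw [← Real.rpow_add h0]
      norm_num
    have hnum : (1-t)^(-s) * (s*t^2*(1-t)^s + t^2*(1-t)^s + s*t^2 + (1-t)^s + s*t - t^2 - 1)
        = -(kf s t) := by
      simp only [kf]
      linear_combination (s*t^2+t^2+1) * hPQ
    rw [hnum, div_eq_zero_iff, neg_eq_zero]
    constructor
    · rintro (h | h)
      · exact h
      · exact absurd h (pow_ne_zero 2 (ne_of_gt ht.1))
    · exact fun h => Or.inl h
  refine ⟨r, ⟨⟨hr0, hr1⟩, (hequiv r ⟨hr0, hr1⟩).mpr hr⟩, ?_⟩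
  rintro y ⟨hy, hyeq⟩
  have hky : kf s y = 0 := (hequiv y hy).mp hyeq
  have hyt₀ : t₀ < y := by
    by_contra h
    push_neg at h
    linarith [hkneg y hy.1 h]
  exact hmonoK.injOn ⟨le_of_lt hyt₀, hy.2⟩ ⟨le_of_lt hrt₀, hr1⟩ (hky.trans hr.symm)
end

section
/- For 0 < s ≤ 1/√2, the polynomial F6(t) = 3 s^5 t^4 - 7 s^4 t^3 + 3 s^3 t^2 + 3 s^2 t + 2 s^3 - 4 s has derivative F6'(t) = 3 s^2 (1 - s t)^2 (1 + 4 s t) > 0 on [0,1), and F6(1) = -s(1-s)(3 s^3 - 4 s^2 + s + 4) < 0; hence F6(t) < 0 for all t in [0,1). -/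
open Real Set

theorem stmt7 (s : ℝ) (hs0 : 0 < s) (hs1 : s ≤ 1 / Real.sqrt 2) :
    (∀ t ∈ Ico (0:ℝ) 1,
      HasDerivAt (fun t : ℝ => 3*s^5*t^4 - 7*s^4*t^3 + 3*s^3*t^2 + 3*s^2*t + 2*s^3 - 4*s)
        (3*s^2*(1 - s*t)^2*(1 + 4*s*t)) t ∧
      0 < 3*s^2*(1 - s*t)^2*(1 + 4*s*t)) ∧
    3*s^5*1^4 - 7*s^4*1^3 + 3*s^3*1^2 + 3*s^2*1 + 2*s^3 - 4*s
      = -s*(1-s)*(3*s^3 - 4*s^2 + s + 4) ∧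
    -s*(1-s)*(3*s^3 - 4*s^2 + s + 4) < 0 ∧
    ∀ t ∈ Ico (0:ℝ) 1, 3*s^5*t^4 - 7*s^4*t^3 + 3*s^3*t^2 + 3*s^2*t + 2*s^3 - 4*s < 0 := by
  have hsq2 : Real.sqrt 2 ≥ 1 := by
    nlinarith [Real.sq_sqrt (show (0:ℝ) ≤ 2 by norm_num), Real.sqrt_nonneg 2]
  have hsq2' : (0:ℝ) < Real.sqrt 2 := by linarith
  have hs2 : s^2 ≤ 1/2 := by
    have h1 : s * Real.sqrt 2 ≤ 1 := by
      rw [div_eq_inv_mul, mul_one] at hs1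
      calc s * Real.sqrt 2 ≤ (Real.sqrt 2)⁻¹ * Real.sqrt 2 := by
            exact mul_le_mul_of_nonneg_right hs1 hsq2'.le
        _ = 1 := inv_mul_cancel₀ hsq2'.ne'
    nlinarith [Real.sq_sqrt (show (0:ℝ) ≤ 2 by norm_num), mul_nonneg hs0.le hsq2'.le]
  have hs1' : s < 1 := by nlinarith
  have hd : ∀ t : ℝ, HasDerivAt (fun t : ℝ => 3*s^5*t^4 - 7*s^4*t^3 + 3*s^3*t^2 + 3*s^2*t + 2*s^3 - 4*s)
      (3*s^2*(1 - s*t)^2*(1 + 4*s*t)) t := by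
    intro t
    have h : HasDerivAt (fun t : ℝ => 3*s^5*t^4 - 7*s^4*t^3 + 3*s^3*t^2 + 3*s^2*t + 2*s^3 - 4*s)
        (3*s^5*(4*t^3) - 7*s^4*(3*t^2) + 3*s^3*(2*t^1) + 3*s^2*1) t := by
      have h4 := (hasDerivAt_pow 4 t).const_mul (3*s^5)
      have h3 := (hasDerivAt_pow 3 t).const_mul (7*s^4)
      have h2 := (hasDerivAt_pow 2 t).const_mul (3*s^3)
      have h1 := (hasDerivAt_id t).const_mul (3*s^2)
      have := ((((h4.sub h3).add h2).add h1).add_const (2*s^3 - 4*s))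
      simp only [id] at this
      exact (this.congr_deriv (by norm_num)).congr_of_eventuallyEq
        (Filter.Eventually.of_forall fun x => by simp only [Pi.add_apply, Pi.sub_apply]; ring)
    convert h using 1
    ring
  have hpos : ∀ t ∈ Ico (0:ℝ) 1, 0 < 3*s^2*(1 - s*t)^2*(1 + 4*s*t) := by
    intro t ht
    obtain ⟨ht0, ht1⟩ := ht
    have hst : s * t < 1 := by nlinarith
    have hst0 : 0 ≤ s * t := mul_nonneg hs0.le ht0
    have : 0 < (1 - s*t)^2 := pow_pos (by linarith) 2
    have h2 : (0:ℝ) < 1 + 4*s*t := by nlinarith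
    have h3 : (0:ℝ) < 3*s^2 := by nlinarith [pow_pos hs0 2]
    exact mul_pos (mul_pos h3 this) h2
  have hcubic : 0 < 3*s^3 - 4*s^2 + s + 4 := by nlinarith
  have hneg : -s*(1-s)*(3*s^3 - 4*s^2 + s + 4) < 0 := by
    have := mul_pos (mul_pos hs0 (by linarith : (0:ℝ) < 1 - s)) hcubic
    nlinarith
  refine ⟨fun t ht => ⟨hd t, hpos t ht⟩, by ring, hneg, ?_⟩
  · intro t ht
    obtain ⟨ht0, ht1⟩ := ht
    set f := fun t : ℝ => 3*s^5*t^4 - 7*s^4*t^3 + 3*s^3*t^2 + 3*s^2*t + 2*s^3 - 4*s with hf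
    have hmono : StrictMonoOn f (Icc (0:ℝ) 1) := by
      apply strictMonoOn_of_deriv_pos (convex_Icc 0 1)
      · exact Continuous.continuousOn (by fun_prop)
      · intro x hx
        rw [interior_Icc] at hx
        rw [(hd x).deriv]
        exact hpos x ⟨hx.1.le, hx.2⟩
    have h1 : f t < f 1 := hmono ⟨ht0, ht1.le⟩ ⟨by norm_num, le_refl 1⟩ ht1
    have hF1 : f 1 = -s*(1-s)*(3*s^3 - 4*s^2 + s + 4) := by simp only [hf]; ring
    have : f 1 < 0 := by rw [hF1]; exact hneg
    calc f t < f 1 := h1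
      _ < 0 := this
end

section
/- For 0 < s ≤ 1/√2, the function F5(t) = 2s(1-t^2)/(1-st) + ((1-t^2)((1+st)^2-1))/t is strictly concave on (0,1), i.e., its second derivative 2(3 s^5 t^4 - 7 s^4 t^3 + 3 s^3 t^2 + 3 s^2 t + 2 s^3 - 4 s)/(1-st)^3 is negative for all t in (0,1). -/
open Real Set

theorem stmt9 (s : ℝ) (hs0 : 0 < s) (hs1 : s ≤ 1 / Real.sqrt 2) :
    StrictConcaveOn ℝ (Ioo (0:ℝ) 1)
      (fun t : ℝ => 2*s*(1-t^2)/(1-s*t) + ((1-t^2)*((1+s*t)^2 - 1))/t) ∧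
    ∀ t ∈ Ioo (0:ℝ) 1,
      deriv (deriv (fun t : ℝ => 2*s*(1-t^2)/(1-s*t) + ((1-t^2)*((1+s*t)^2 - 1))/t)) t
        = 2*(3*s^5*t^4 - 7*s^4*t^3 + 3*s^3*t^2 + 3*s^2*t + 2*s^3 - 4*s)/(1-s*t)^3 ∧
      2*(3*s^5*t^4 - 7*s^4*t^3 + 3*s^3*t^2 + 3*s^2*t + 2*s^3 - 4*s)/(1-s*t)^3 < 0 := by
  set f : ℝ → ℝ := fun t : ℝ => 2*s*(1-t^2)/(1-s*t) + ((1-t^2)*((1+s*t)^2 - 1))/t with hf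
  set g : ℝ → ℝ := fun t : ℝ => 2*s*(s*t^2-2*t+s)/(1-s*t)^2 + s^2 - 4*s*t - 3*s^2*t^2 with hg
  set h : ℝ → ℝ := fun t : ℝ =>
    2*(3*s^5*t^4 - 7*s^4*t^3 + 3*s^3*t^2 + 3*s^2*t + 2*s^3 - 4*s)/(1-s*t)^3 with hh
  have hsq : Real.sqrt 2 ^ 2 = 2 := Real.sq_sqrt (by norm_num)
  have hsp : 0 < Real.sqrt 2 := Real.sqrt_pos.mpr (by norm_num)
  have hs1' : s < 1 := by
    have h2 : 1 / Real.sqrt 2 < 1 := by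
      rw [div_lt_one hsp]; nlinarith
    linarith
  have hs2 : s^2 ≤ 1/2 := by
    have h1 : s^2 ≤ (1 / Real.sqrt 2)^2 := by
      apply pow_le_pow_left₀ hs0.le hs1
    rw [div_pow, hsq, one_pow] at h1
    linarith
  have hst : ∀ t ∈ Ioo (0:ℝ) 1, 0 < 1 - s*t := by
    intro t ht
    nlinarith [ht.1, ht.2]
  have hfd : ∀ t ∈ Ioo (0:ℝ) 1, HasDerivAt f (g t) t := by
    intro t ht
    have ht0 : (0:ℝ) < t := ht.1
    have hd := hst t ht
    have hp2 : HasDerivAt (fun x:ℝ => x^2) (2*t) t := by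
      simpa using hasDerivAt_pow 2 t
    have hA : HasDerivAt (fun x:ℝ => 1 - x^2) (-(2*t)) t := hp2.const_sub 1
    have hnum1 : HasDerivAt (fun x:ℝ => 2*s*(1-x^2)) (2*s*(-(2*t))) t := hA.const_mul (2*s)
    have hden1 : HasDerivAt (fun x:ℝ => 1 - s*x) (-(s*1)) t :=
      ((hasDerivAt_id t).const_mul s).const_sub 1
    have h1 := hnum1.div hden1 (ne_of_gt hd)
    have hb : HasDerivAt (fun x:ℝ => 1 + s*x) (s*1) t :=
      ((hasDerivAt_id t).const_mul s).const_add 1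
    have hb2 : HasDerivAt (fun x:ℝ => (1+s*x)^2) (2*(1+s*t)^1*(s*1)) t := by
      simpa using hb.fun_pow 2
    have hb3 : HasDerivAt (fun x:ℝ => (1+s*x)^2 - 1) (2*(1+s*t)^1*(s*1)) t := hb2.sub_const 1
    have hnum2 := hA.mul hb3
    have h2 := hnum2.div (hasDerivAt_id t) (ne_of_gt ht0)
    have h3 := h1.add h2
    have hd' : (1 - s*t) ≠ 0 := ne_of_gt hd
    have ht0' : t ≠ 0 := ne_of_gt ht0
    refine h3.congr_deriv ?_
    rw [hg]
    simp only [id_eq, Pi.mul_apply]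
    field_simp
    ring
  have hgd : ∀ t ∈ Ioo (0:ℝ) 1, HasDerivAt g (h t) t := by
    intro t ht
    have hd := hst t ht
    have hp2 : HasDerivAt (fun x:ℝ => x^2) (2*t) t := by
      simpa using hasDerivAt_pow 2 t
    have hnum : HasDerivAt (fun x:ℝ => 2*s*(s*x^2-2*x+s)) (2*s*(s*(2*t)-2)) t := by
      have := ((hp2.const_mul s).sub ((hasDerivAt_id t).const_mul 2)).add_const s
      have := this.const_mul (2*s)
      exact this.congr_deriv (by ring)
    have hden : HasDerivAt (fun x:ℝ => (1-s*x)^2) (2*(1-s*t)^1*(-(s*1))) t := by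
      have hl : HasDerivAt (fun x:ℝ => 1 - s*x) (-(s*1)) t :=
        ((hasDerivAt_id t).const_mul s).const_sub 1
      simpa using hl.fun_pow 2
    have h1 := hnum.div hden (by positivity)
    have hrest : HasDerivAt (fun x:ℝ => s^2 - 4*s*x - 3*s^2*x^2) (-(4*s) - 3*s^2*(2*t)) t := by
      have := (((hasDerivAt_id t).const_mul (4*s)).const_sub (s^2)).sub (hp2.const_mul (3*s^2))
      exact this.congr_deriv (by ring)
    have h3 := h1.add hrest
    refine HasDerivAt.congr_of_eventuallyEq (HasDerivAt.congr_deriv h3 ?_) (Filter.Eventually.of_forall fun x => ?_)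
    swap
    · simp [hg]; ring
    · rw [hh]
      have : (1-s*t) ≠ 0 := ne_of_gt hd
      field_simp
      ring
  have hderiv1 : ∀ t ∈ Ioo (0:ℝ) 1, deriv f t = g t := fun t ht => (hfd t ht).deriv
  have hderiv2 : ∀ t ∈ Ioo (0:ℝ) 1, deriv (deriv f) t = h t := by
    intro t ht
    have heq : deriv f =ᶠ[nhds t] g :=
      Filter.eventuallyEq_of_mem (isOpen_Ioo.mem_nhds ht) hderiv1
    rw [heq.deriv_eq]
    exact (hgd t ht).deriv
  have hneg : ∀ t ∈ Ioo (0:ℝ) 1, h t < 0 := by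
    intro t ht
    have hd := hst t ht
    rw [hh]
    apply div_neg_of_neg_of_pos _ (by positivity)
    have ht0 := ht.1
    have ht1 := ht.2
    nlinarith [sq_nonneg (s*t), sq_nonneg (s*t-1), sq_nonneg t, mul_pos hs0 ht0,
      mul_pos (mul_pos hs0 ht0) (mul_pos hs0 ht0), sq_nonneg (s*t*(s*t-1)),
      mul_pos (mul_pos (mul_pos hs0 ht0) (mul_pos hs0 ht0)) (mul_pos hs0 ht0)]
  constructor
  · apply strictConcaveOn_of_deriv2_neg (convex_Ioo 0 1)
    · exact fun t ht => (hfd t ht).differentiableAt.continuousAt.continuousWithinAt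
    · intro t ht
      rw [interior_Ioo] at ht
      show deriv (deriv f) t < 0
      rw [hderiv2 t ht]
      exact hneg t ht
  · intro t ht
    exact ⟨hderiv2 t ht, hneg t ht⟩
end

section
/- For 0 < s ≤ 1/√2, the quartic equation -3 s^4 t^4 + 2 s^3 t^3 + (s^4 + 7 s^2) t^2 - (2 s^3 + 8 s) t + 3 s^2 = 0 has exactly one root t_s in the interval (0,1). -/
open Real Set

theorem stmt10 (s : ℝ) (hs0 : 0 < s) (hs1 : s ≤ 1 / Real.sqrt 2) :
    ∃! t : ℝ, t ∈ Ioo (0:ℝ) 1 ∧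
      -3*s^4*t^4 + 2*s^3*t^3 + (s^4 + 7*s^2)*t^2 - (2*s^3 + 8*s)*t + 3*s^2 = 0 := by
  have hsqrt2 : (1:ℝ) < Real.sqrt 2 := by
    nlinarith [Real.sq_sqrt (by norm_num : (0:ℝ) ≤ 2), Real.sqrt_nonneg 2]
  have hs1' : s < 1 := lt_of_le_of_lt hs1 (by rw [div_lt_one (by positivity)]; exact hsqrt2)
  set q : ℝ → ℝ := fun t => -3*s^4*t^4 + 2*s^3*t^3 + (s^4 + 7*s^2)*t^2 - (2*s^3 + 8*s)*t + 3*s^2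
    with hq_def
  set g : ℝ → ℝ := fun t => 2*s*(s - 2*t + s*t^2) / (1 - s*t)^2 + (s^2 - 4*s*t - 3*s^2*t^2)
    with hg_def
  have hden : ∀ t ∈ Ioo (0:ℝ) 1, 0 < 1 - s*t := by
    rintro t ⟨ht0, ht1⟩; nlinarith
  -- g t = q t / (1 - s t)^2
  have hgq : ∀ t ∈ Ioo (0:ℝ) 1, g t = q t / (1 - s*t)^2 := by
    intro t ht
    have h := hden t ht
    simp only [hq_def, hg_def]
    field_simp
    ring
  -- derivative of g
  have hg_deriv : ∀ t ∈ Ioo (0:ℝ) 1,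
      HasDerivAt g ((4*s^3 - 4*s)/(1 - s*t)^3 - 4*s - 6*s^2*t) t := by
    intro t ht
    have h := hden t ht
    have hid : HasDerivAt (fun x : ℝ => x) 1 t := hasDerivAt_id t
    have hu : HasDerivAt (fun x : ℝ => 2*s*(s - 2*x + s*x^2)) (2*s*(-2 + 2*s*t)) t := by
      have h1 : HasDerivAt (fun x : ℝ => s - 2*x + s*x^2) (-2 + 2*s*t) t := by
        have := ((hasDerivAt_const t s).sub (hid.const_mul 2)).add
          ((hasDerivAt_pow 2 t).const_mul s)
        exact this.congr_deriv (by push_cast; ring)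
      simpa using h1.const_mul (2*s)
    have hv : HasDerivAt (fun x : ℝ => (1 - s*x)^2) (2*(1 - s*t)*(-s)) t := by
      have h1 : HasDerivAt (fun x : ℝ => 1 - s*x) (-s) t := by
        exact ((hasDerivAt_const t (1:ℝ)).sub (hid.const_mul s)).congr_deriv (by ring)
      have := h1.pow 2
      exact this.congr_deriv (by push_cast; ring)
    have hw : HasDerivAt (fun x : ℝ => s^2 - 4*s*x - 3*s^2*x^2) (-4*s - 6*s^2*t) t := by
      have := ((hasDerivAt_const t (s^2)).sub (hid.const_mul (4*s))).sub
        ((hasDerivAt_pow 2 t).const_mul (3*s^2))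
      exact this.congr_deriv (by push_cast; ring)
    have hdiv := (hu.div hv (by positivity)).add hw
    refine hdiv.congr_deriv ?_
    field_simp
    ring
  have hg_anti : StrictAntiOn g (Ioo (0:ℝ) 1) := by
    apply strictAntiOn_of_deriv_neg (convex_Ioo 0 1)
    · intro t ht
      exact ((hg_deriv t ht).differentiableAt.continuousAt).continuousWithinAt
    · intro t ht
      rw [interior_Ioo] at ht
      rw [(hg_deriv t ht).deriv]
      have h := hden t ht
      have h1 : (4*s^3 - 4*s)/(1 - s*t)^3 < 0 := by
        apply div_neg_of_neg_of_pos
        · nlinarith [mul_pos hs0 (mul_pos (sub_pos.2 hs1') (by linarith : (0:ℝ) < 1 + s))]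
        · positivity
      nlinarith [ht.1]
  -- existence via IVT
  have hqcont : ContinuousOn q (Icc (0:ℝ) 1) := by
    apply Continuous.continuousOn; fun_prop
  have hq0 : q 0 = 3*s^2 := by simp [hq_def]
  have hq1 : q 1 < 0 := by
    have h4 : 4 - s^2 - s > 0 := by nlinarith
    have := mul_pos (sub_pos.2 hs1') h4
    simp only [hq_def]
    nlinarith
  have hmem : (0:ℝ) ∈ Ioo (q 1) (q 0) := ⟨hq1, by rw [hq0]; positivity⟩
  obtain ⟨t₀, ht₀, hqt₀⟩ := intermediate_value_Ioo' (by norm_num : (0:ℝ) ≤ 1) hqcont hmem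
  refine ⟨t₀, ⟨ht₀, hqt₀⟩, ?_⟩
  rintro y ⟨hy, hqy⟩
  have hgy : g y = 0 := by rw [hgq y hy, show q y = 0 from hqy]; simp
  have hgt₀ : g t₀ = 0 := by rw [hgq t₀ ht₀, hqt₀]; simp
  exact hg_anti.injOn hy ht₀ (by rw [hgy, hgt₀])
end

section
/- For 0 < s < 1 and 0 < r < 1, the function F7(r) = (1-r)^{-s-1}(r^3 s^2 - r^3 s + r^2 s^2 + r^2 s + 2r(1-r)^s - 2(1-r)^s - 2rs - 2r + 2) has derivative F7'(r) = r^2 (s-1) s (r s - 2r + s + 4)/(1-r)^{s+2} ≤ 0, and lim_{r→0+} F7(r) = 0; hence F7(r) ≤ 0 on (0,1). -/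
open Real Set Filter

theorem stmt12 (s : ℝ) (hs0 : 0 < s) (hs1 : s < 1) :
    (∀ r ∈ Ioo (0:ℝ) 1,
      HasDerivAt (fun r : ℝ => (1-r)^(-s-1) *
          (r^3*s^2 - r^3*s + r^2*s^2 + r^2*s + 2*r*(1-r)^s - 2*(1-r)^s - 2*r*s - 2*r + 2))
        (r^2*(s-1)*s*(r*s - 2*r + s + 4)/(1-r)^(s+2)) r ∧
      r^2*(s-1)*s*(r*s - 2*r + s + 4)/(1-r)^(s+2) ≤ 0) ∧
    Tendsto (fun r : ℝ => (1-r)^(-s-1) *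
        (r^3*s^2 - r^3*s + r^2*s^2 + r^2*s + 2*r*(1-r)^s - 2*(1-r)^s - 2*r*s - 2*r + 2))
      (nhdsWithin 0 (Ioi 0)) (nhds 0) ∧
    ∀ r ∈ Ioo (0:ℝ) 1,
      (1-r)^(-s-1) *
        (r^3*s^2 - r^3*s + r^2*s^2 + r^2*s + 2*r*(1-r)^s - 2*(1-r)^s - 2*r*s - 2*r + 2) ≤ 0 := by
  set F : ℝ → ℝ := fun r : ℝ => (1-r)^(-s-1) *
      (r^3*s^2 - r^3*s + r^2*s^2 + r^2*s + 2*r*(1-r)^s - 2*(1-r)^s - 2*r*s - 2*r + 2) with hF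
  set F₂ : ℝ → ℝ := fun r : ℝ => (1-r)^(-s-1) *
      (r^3*s^2 - r^3*s + r^2*s^2 + r^2*s - 2*r*s - 2*r + 2) - 2 with hF2
  -- local equality of F and F₂ on {x | x < 1}
  have heq : ∀ x : ℝ, x < 1 → F x = F₂ x := by
    intro x hx
    have hpos : (0:ℝ) < 1 - x := by linarith
    have key : (1-x)^(-s-1) * (1-x)^s * (1-x) = 1 := by
      rw [← Real.rpow_add hpos, show -s-1+s = -1 by ring,
        ← Real.rpow_add_one hpos.ne', show (-1:ℝ)+1 = 0 by ring, Real.rpow_zero]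
    simp only [hF, hF2]
    linear_combination (-2 : ℝ) * key
  -- derivative of F₂ and hence of F
  have hder : ∀ r ∈ Ioo (0:ℝ) 1,
      HasDerivAt F (r^2*(s-1)*s*(r*s - 2*r + s + 4)/(1-r)^(s+2)) r := by
    intro r hr
    have hpos : (0:ℝ) < 1 - r := by linarith [hr.2]
    have hlin : HasDerivAt (fun x : ℝ => 1 - x) (-1) r := by
      simpa using (hasDerivAt_id r).const_sub 1
    have hg : HasDerivAt (fun x : ℝ => (1-x)^(-s-1))
        ((-1) * (-s-1) * (1-r)^(-s-1-1)) r :=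
      hlin.rpow_const (Or.inl hpos.ne')
    have h3 : HasDerivAt (fun x : ℝ => x^3) (3*r^2) r := by
      simpa using hasDerivAt_pow 3 r
    have h2 : HasDerivAt (fun x : ℝ => x^2) (2*r) r := by
      simpa using hasDerivAt_pow 2 r
    have hQ : HasDerivAt (fun x : ℝ => x^3*s^2 - x^3*s + x^2*s^2 + x^2*s - 2*x*s - 2*x + 2)
        (3*r^2*s^2 - 3*r^2*s + 2*r*s^2 + 2*r*s - 2*s - 2) r := by
      have := (((((((h3.mul_const (s^2)).sub (h3.mul_const s)).add
        (h2.mul_const (s^2))).add (h2.mul_const s)).sub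
        ((hasDerivAt_id r).const_mul 2 |>.mul_const s)).sub
        ((hasDerivAt_id r).const_mul 2)).add_const 2)
      refine (this.congr_deriv (by ring)).congr_of_eventuallyEq (Filter.Eventually.of_forall fun x => ?_)
      simp only [Pi.add_apply, Pi.sub_apply, id]
    have hF2d : HasDerivAt F₂
        ((-1) * (-s-1) * (1-r)^(-s-1-1) *
          (r^3*s^2 - r^3*s + r^2*s^2 + r^2*s - 2*r*s - 2*r + 2) +
         (1-r)^(-s-1) * (3*r^2*s^2 - 3*r^2*s + 2*r*s^2 + 2*r*s - 2*s - 2)) r :=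
      (hg.mul hQ).sub_const 2
    have hFd : HasDerivAt F
        ((-1) * (-s-1) * (1-r)^(-s-1-1) *
          (r^3*s^2 - r^3*s + r^2*s^2 + r^2*s - 2*r*s - 2*r + 2) +
         (1-r)^(-s-1) * (3*r^2*s^2 - 3*r^2*s + 2*r*s^2 + 2*r*s - 2*s - 2)) r := by
      apply hF2d.congr_of_eventuallyEq
      filter_upwards [eventually_lt_nhds hr.2] with x hx
      exact heq x hx
    convert hFd using 1
    have hA : (0:ℝ) < (1-r)^(s+2) := Real.rpow_pos_of_pos hpos _
    have e1 : (1-r)^(-s-1-1) = ((1-r)^(s+2))⁻¹ := by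
      rw [← Real.rpow_neg hpos.le]; ring_nf
    have e2 : (1-r)^(-s-1) = (1-r) * ((1-r)^(s+2))⁻¹ := by
      rw [← Real.rpow_neg hpos.le, ← Real.rpow_one_add' hpos.le (by nlinarith : (1:ℝ) + -(s+2) ≠ 0)]
      ring_nf
    rw [e1, e2]
    field_simp
    ring
  -- sign of derivative
  have hsign : ∀ r ∈ Ioo (0:ℝ) 1,
      r^2*(s-1)*s*(r*s - 2*r + s + 4)/(1-r)^(s+2) ≤ 0 := by
    intro r hr
    have hpos : (0:ℝ) < 1 - r := by linarith [hr.2]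
    have hA : (0:ℝ) < (1-r)^(s+2) := Real.rpow_pos_of_pos hpos _
    apply div_nonpos_of_nonpos_of_nonneg _ hA.le
    have h1 : (0:ℝ) < r*s - 2*r + s + 4 := by nlinarith [hr.1, hr.2]
    have h2 : 0 ≤ r^2*(1-s)*s*(r*s - 2*r + s + 4) :=
      mul_nonneg (mul_nonneg (mul_nonneg (sq_nonneg r) (by linarith)) hs0.le) h1.le
    nlinarith [h2]
  -- limit at 0
  have hlim : Tendsto F (nhdsWithin 0 (Ioi 0)) (nhds 0) := by
    have hc : ContinuousAt F 0 := by
      apply ContinuousAt.mul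
      · exact (continuous_const.sub continuous_id).continuousAt.rpow_const
          (Or.inl (by norm_num))
      · apply ContinuousAt.add
        apply ContinuousAt.sub
        apply ContinuousAt.sub
        apply ContinuousAt.sub
        apply ContinuousAt.add
        · fun_prop
        · exact (continuous_const.mul continuous_id).continuousAt.mul
            ((continuous_const.sub continuous_id).continuousAt.rpow_const
              (Or.inl (by norm_num)))
        · exact ContinuousAt.mul continuousAt_const
            ((continuous_const.sub continuous_id).continuousAt.rpow_const
              (Or.inl (by norm_num)))
        all_goals fun_prop
    have hF0 : F 0 = 0 := by
      simp [hF, Real.one_rpow]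
    have := hc.continuousWithinAt (s := Ioi (0:ℝ))
    rw [ContinuousWithinAt, hF0] at this
    exact this
  refine ⟨fun r hr => ⟨hder r hr, hsign r hr⟩, hlim, ?_⟩
  -- conclude F ≤ 0 on Ioo 0 1
  intro r hr
  have hanti : AntitoneOn F (Ioo (0:ℝ) 1) := by
    refine antitoneOn_of_deriv_nonpos (convex_Ioo 0 1)
      (fun x hx => ((hder x hx).continuousAt).continuousWithinAt) ?_ ?_
    · intro x hx
      rw [interior_Ioo] at hx
      exact ((hder x hx).differentiableAt).differentiableWithinAt
    · intro x hx
      rw [interior_Ioo] at hx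
      rw [(hder x hx).deriv]
      exact hsign x hx
  have hev : ∀ᶠ x in nhdsWithin (0:ℝ) (Ioi 0), F r ≤ F x := by
    filter_upwards [Ioo_mem_nhdsGT_of_mem (Set.mem_Ico.mpr ⟨le_refl 0, hr.1⟩)] with x hx
    exact hanti ⟨hx.1, hx.2.trans hr.2⟩ hr hx.2.le
  exact ge_of_tendsto hlim hev
end

section
/- For 0 < s < 1, the function F6(r) = ((1+r)(1-r)^{1-s} - (1-r^2))/r on (0,1) is concave (its second derivative is ≤ 0), its derivative tends to s(s+1)/2 as r → 0+ and to -∞ as r → 1-, and consequently the equation (1-r)^{-s}(r^2(1-r)^s + r^2 s - r^2 + (1-r)^s + r s - 1)/r^2 = 0 has a unique root r_s in (0,1) at which F6 attains its maximum over (0,1). -/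
open Real Set Filter Topology

noncomputable def Nf (s r : ℝ) : ℝ := (1+r^2)*(1-r)^s + (s-1)*r^2 + s*r - 1
noncomputable def Nd1 (s r : ℝ) : ℝ := 2*r*(1-r)^s - s*(1+r^2)*(1-r)^(s-1) + 2*(s-1)*r + s
noncomputable def Nd2 (s r : ℝ) : ℝ :=
  2*(1-r)^s - 4*s*r*(1-r)^(s-1) + s*(s-1)*(1+r^2)*(1-r)^(s-2) + 2*(s-1)
noncomputable def Fd1 (s r : ℝ) : ℝ := Nf s r / r^2 * (1-r)^(-s)
noncomputable def Fd2 (s r : ℝ) : ℝ :=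
  (2*(1-r)*(1 - s*r - (1-r)^s) - s*(1-s)*r^2*(1+r)) / (r^3*((1-r)*(1-r)^s))


lemma hasDerivAt_omr (p r : ℝ) (h : (1:ℝ) - r ≠ 0) :
    HasDerivAt (fun x : ℝ => (1-x)^p) (-(p*(1-r)^(p-1))) r := by
  have h1 : HasDerivAt (fun x : ℝ => 1 - x) (-1) r := by
    simpa using (hasDerivAt_id r).const_sub 1
  have := h1.rpow_const (p := p) (Or.inl h)
  convert this using 1; ring

lemma hasDerivAt_Nf (s : ℝ) {r : ℝ} (hr : r < 1) :
    HasDerivAt (Nf s) (Nd1 s r) r := by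
  have h1 : (1:ℝ) - r ≠ 0 := by intro h; nlinarith
  have ha : HasDerivAt (fun x : ℝ => 1 + x^2) (2*r) r := by
    simpa using (hasDerivAt_pow 2 r).const_add 1
  have hb := hasDerivAt_omr s r h1
  have hc : HasDerivAt (fun x : ℝ => (s-1)*x^2 + s*x - 1)
      ((s-1)*(2*r) + s) r := by
    have h1 := (hasDerivAt_pow 2 r).const_mul (s-1)
    have h2 := (hasDerivAt_id r).const_mul s
    simpa using (h1.add h2).sub_const 1
  have := (ha.mul hb).add hc
  convert this using 1
  · rfl
  · rfl
  · ext x; unfold Nf; simp only [Pi.add_apply, Pi.mul_apply]; ring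
  · unfold Nd1; ring

lemma hasDerivAt_Nd1 (s : ℝ) {r : ℝ} (hr : r < 1) :
    HasDerivAt (Nd1 s) (Nd2 s r) r := by
  have h1 : (1:ℝ) - r ≠ 0 := by intro h; nlinarith
  have ha : HasDerivAt (fun x : ℝ => 2*x) 2 r := by
    simpa using (hasDerivAt_id r).const_mul 2
  have hb := hasDerivAt_omr s r h1
  have hc : HasDerivAt (fun x : ℝ => 1 + x^2) (2*r) r := by
    simpa using (hasDerivAt_pow 2 r).const_add 1
  have hd := hasDerivAt_omr (s-1) r h1
  have he : HasDerivAt (fun x : ℝ => 2*(s-1)*x + s) (2*(s-1)) r := by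
    simpa using ((hasDerivAt_id r).const_mul (2*(s-1))).add_const s
  have hmul1 := ha.mul hb
  have hmul2 := (hc.mul hd).const_mul s
  have := (hmul1.sub hmul2).add he
  convert this using 1
  · rfl
  · rfl
  · ext x; unfold Nd1; simp only [Pi.add_apply, Pi.sub_apply, Pi.mul_apply]; ring
  · unfold Nd2; rw [show s - 1 - 1 = s - 2 by ring]; ring

lemma rpow_facts {r : ℝ} (h1 : (0:ℝ) < 1 - r) (s : ℝ) :
    (1-r)^(-s) = ((1-r)^s)⁻¹ ∧ (1-r)^(1-s) = (1-r) * ((1-r)^s)⁻¹ ∧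
    (1-r)^(s-1) = (1-r)^s / (1-r) ∧ (1-r)^(-s-1) = ((1-r)^s)⁻¹ / (1-r) := by
  have e1 : (1-r)^(-s) = ((1-r)^s)⁻¹ := rpow_neg h1.le s
  refine ⟨e1, ?_, ?_, ?_⟩
  · rw [show (1:ℝ)-s = 1 + -s by ring, rpow_add h1, rpow_one, e1]
  · rw [show s-1 = s + -1 by ring, rpow_add h1, rpow_neg_one, div_eq_mul_inv]
  · rw [show -s-1 = -s + -1 by ring, rpow_add h1, rpow_neg_one, e1, div_eq_mul_inv]

lemma hasDerivAt_F (s : ℝ) {r : ℝ} (hr : r ∈ Ioo (0:ℝ) 1) :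
    HasDerivAt (fun r : ℝ => ((1+r)*(1-r)^(1-s) - (1-r^2))/r) (Fd1 s r) r := by
  obtain ⟨hr0, hr1⟩ := hr
  have h1 : (0:ℝ) < 1 - r := by linarith
  have ha : HasDerivAt (fun x : ℝ => 1 + x) 1 r := by
    simpa using (hasDerivAt_id r).const_add 1
  have hb := hasDerivAt_omr (1-s) r h1.ne'
  have hc : HasDerivAt (fun x : ℝ => 1 - x^2) (-(2*r)) r := by
    simpa using (hasDerivAt_pow 2 r).const_sub 1
  have hnum := (ha.mul hb).sub hc
  have := hnum.div (hasDerivAt_id r) hr0.ne'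
  convert this using 1
  · rfl
  · rfl
  · rfl
  obtain ⟨e1, e2, e3, e4⟩ := rpow_facts h1 s
  have hw : (0:ℝ) < (1-r)^s := rpow_pos_of_pos h1 s
  rw [show (1:ℝ)-s-1 = -s by ring]
  simp only [Fd1, Nf, e1, e2, Pi.mul_apply, Pi.sub_apply, id]
  field_simp
  ring

lemma hasDerivAt_Fd1 (s : ℝ) {r : ℝ} (hr : r ∈ Ioo (0:ℝ) 1) :
    HasDerivAt (Fd1 s) (Fd2 s r) r := by
  obtain ⟨hr0, hr1⟩ := hr
  have h1 : (0:ℝ) < 1 - r := by linarith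
  have hNf : HasDerivAt (Nf s)
      (2*r*(1-r)^s - s*(1+r^2)*(1-r)^(s-1) + 2*(s-1)*r + s) r := by
    have ha : HasDerivAt (fun x : ℝ => 1 + x^2) (2*r) r := by
      simpa using (hasDerivAt_pow 2 r).const_add 1
    have hb := hasDerivAt_omr s r h1.ne'
    have hc : HasDerivAt (fun x : ℝ => (s-1)*x^2 + s*x - 1)
        ((s-1)*(2*r) + s) r := by
      have k1 := (hasDerivAt_pow 2 r).const_mul (s-1)
      have k2 := (hasDerivAt_id r).const_mul s
      simpa using (k1.add k2).sub_const 1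
    have := (ha.mul hb).add hc
    convert this using 1
    · rfl
    · rfl
    · ext x; unfold Nf; simp only [Pi.add_apply, Pi.mul_apply]; ring
    · ring
  have hq := hNf.div (hasDerivAt_pow 2 r) (by positivity : r^2 ≠ 0)
  have hy := hasDerivAt_omr (-s) r h1.ne'
  have := hq.mul hy
  convert this using 1
  · rfl
  · rfl
  · rfl
  obtain ⟨e1, e2, e3, e4⟩ := rpow_facts h1 s
  have hw : (0:ℝ) < (1-r)^s := rpow_pos_of_pos h1 s
  rw [show -s-1 = -s-1 from rfl]
  simp only [Fd2, Fd1, Nf, e1, e2, e3, e4, Pi.div_apply]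
  have hr2 : ((2:ℕ):ℝ) = (2:ℝ) := by norm_num
  field_simp
  ring

lemma keyV {s : ℝ} (hs0 : 0 < s) (hs1 : s < 1) :
    ∀ t ∈ Ico (0:ℝ) 1, 2*(1-t)*(1 - s*t - (1-t)^s) ≤ s*(1-s)*t^2 := by
  set V : ℝ → ℝ := fun t => s*(1-s)*t^2/2 - (1-t)*(1 - s*t - (1-t)^s) with hV
  set V1 : ℝ → ℝ := fun t => s*(1-s)*t + 1 + s - 2*s*t - (1+s)*(1-t)^s with hV1
  set V2 : ℝ → ℝ := fun t => s*(1+s)*((1-t)^(s-1) - 1) with hV2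
  have hdV : ∀ t ∈ Iio (1:ℝ), HasDerivAt V (V1 t) t := by
    intro t ht
    have h1 : (0:ℝ) < 1 - t := by simp only [mem_Iio] at ht; linarith
    have ha : HasDerivAt (fun x : ℝ => s*(1-s)*x^2/2) (s*(1-s)*t) t := by
      have := ((hasDerivAt_pow 2 t).const_mul (s*(1-s))).div_const 2
      convert this using 1; rfl; rfl; push_cast; ring
    have hb : HasDerivAt (fun x : ℝ => 1 - x) (-1) t := by
      simpa using (hasDerivAt_id t).const_sub 1
    have hc : HasDerivAt (fun x : ℝ => 1 - s*x - (1-x)^s)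
        (-s - (-(s*(1-t)^(s-1)))) t := by
      have k1 : HasDerivAt (fun x : ℝ => 1 - s*x) (-s) t := by
        simpa using ((hasDerivAt_id t).const_mul s).const_sub 1
      exact k1.sub (hasDerivAt_omr s t h1.ne')
    have := ha.sub (hb.mul hc)
    convert this using 1
    · rfl
    · rfl
    · rfl
    have e3 : (1-t)^(s-1) = (1-t)^s / (1-t) := by
      rw [show s-1 = s + -1 by ring, rpow_add h1, rpow_neg_one, div_eq_mul_inv]
    simp only [hV1, e3]
    field_simp
    ring
  have hdV1 : ∀ t ∈ Iio (1:ℝ), HasDerivAt V1 (V2 t) t := by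
    intro t ht
    have h1 : (0:ℝ) < 1 - t := by simp only [mem_Iio] at ht; linarith
    have ha : HasDerivAt (fun x : ℝ => s*(1-s)*x + 1 + s - 2*s*x)
        (s*(1-s) - 2*s) t := by
      have heq : (fun x : ℝ => s*(1-s)*x + 1 + s - 2*s*x)
          = fun x => (s*(1-s) - 2*s)*x + (1+s) := by ext x; ring
      rw [heq]
      simpa using ((hasDerivAt_id t).const_mul (s*(1-s)-2*s)).add_const (1+s)
    have hb := (hasDerivAt_omr s t h1.ne').const_mul (1+s)
    have := ha.sub hb
    convert this using 1
    · rfl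
    · rfl
    · rfl
    simp only [hV2]; ring
  -- V1 is monotone on Ico 0 1 and V1 0 = 0, so V1 ≥ 0 on Ico 0 1
  have hV2nonneg : ∀ t ∈ Ioo (0:ℝ) 1, 0 ≤ V2 t := by
    intro t ht
    have h1 : (0:ℝ) < 1 - t := by linarith [ht.2]
    have h2 : (1:ℝ) ≤ (1-t)^(s-1) :=
      one_le_rpow_of_pos_of_le_one_of_nonpos h1 (by linarith [ht.1]) (by linarith)
    simp only [hV2]
    exact mul_nonneg (by positivity) (by linarith)
  have hV1cont : ContinuousOn V1 (Ico (0:ℝ) 1) := fun t ht =>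
    ((hdV1 t (by exact lt_of_lt_of_le ht.2 le_rfl)).continuousAt).continuousWithinAt
  have hV1mono : MonotoneOn V1 (Ico (0:ℝ) 1) := by
    apply monotoneOn_of_deriv_nonneg (convex_Ico 0 1) hV1cont
    · intro t ht
      rw [interior_Ico] at ht
      exact ((hdV1 t (mem_Iio.mpr ht.2)).differentiableAt).differentiableWithinAt
    · intro t ht
      rw [interior_Ico] at ht
      rw [(hdV1 t (mem_Iio.mpr ht.2)).deriv]
      exact hV2nonneg t ht
  have hV10 : V1 0 = 0 := by simp [hV1]
  have hV1nonneg : ∀ t ∈ Ico (0:ℝ) 1, 0 ≤ V1 t := by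
    intro t ht
    have := hV1mono (left_mem_Ico.mpr one_pos) ht ht.1
    rwa [hV10] at this
  have hVcont : ContinuousOn V (Ico (0:ℝ) 1) := fun t ht =>
    ((hdV t (mem_Iio.mpr ht.2)).continuousAt).continuousWithinAt
  have hVmono : MonotoneOn V (Ico (0:ℝ) 1) := by
    apply monotoneOn_of_deriv_nonneg (convex_Ico 0 1) hVcont
    · intro t ht
      rw [interior_Ico] at ht
      exact ((hdV t (mem_Iio.mpr ht.2)).differentiableAt).differentiableWithinAt
    · intro t ht
      rw [interior_Ico] at ht
      rw [(hdV t (mem_Iio.mpr ht.2)).deriv]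
      exact hV1nonneg t (Ioo_subset_Ico_self ht)
  have hV0 : V 0 = 0 := by simp [hV]
  intro t ht
  have := hVmono (left_mem_Ico.mpr one_pos) ht ht.1
  rw [hV0] at this
  simp only [hV] at this
  nlinarith

lemma Fd2_neg {s : ℝ} (hs0 : 0 < s) (hs1 : s < 1) {r : ℝ} (hr : r ∈ Ioo (0:ℝ) 1) :
    Fd2 s r < 0 := by
  obtain ⟨hr0, hr1⟩ := hr
  have h1 : (0:ℝ) < 1 - r := by linarith
  have hw : (0:ℝ) < (1-r)^s := rpow_pos_of_pos h1 s
  have hkey := keyV hs0 hs1 r ⟨hr0.le, hr1⟩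
  apply div_neg_of_neg_of_pos
  · nlinarith [mul_pos (mul_pos hs0 (by linarith : (0:ℝ) < 1 - s)) (pow_pos hr0 3)]
  · positivity

lemma deriv_F_eq {s : ℝ} {r : ℝ} (hr : r ∈ Ioo (0:ℝ) 1) :
    deriv (fun r : ℝ => ((1+r)*(1-r)^(1-s) - (1-r^2))/r) r = Fd1 s r :=
  (hasDerivAt_F s hr).deriv

lemma contAt_omr (p r : ℝ) (h : (1:ℝ) - r ≠ 0) :
    ContinuousAt (fun x : ℝ => (1-x)^p) r :=
  (hasDerivAt_omr p r h).continuousAt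

lemma tendsto_Nf_div {s : ℝ} (hs0 : 0 < s) (hs1 : s < 1) :
    Tendsto (fun r => Nf s r / r^2) (𝓝[>](0:ℝ)) (𝓝 (s*(s+1)/2)) := by
  have hone : (1:ℝ) - 0 ≠ 0 := by norm_num
  -- second level l'Hopital
  have hNd2cont : ContinuousAt (Nd2 s) 0 := by
    unfold Nd2
    exact ((((contAt_omr s 0 hone).const_mul 2).sub
      ((continuousAt_id.const_mul (4*s)).mul (contAt_omr (s-1) 0 hone))).add
      (((show ContinuousAt (fun x : ℝ => s*(s-1)*(1+x^2)) 0 by fun_prop).mul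
        (contAt_omr (s-2) 0 hone)))).add continuousAt_const
  have hNd2val : Nd2 s 0 = s*(s+1) := by
    simp [Nd2, Real.one_rpow]; ring
  have hdiv2 : Tendsto (fun x => Nd2 s x / 2) (𝓝[>](0:ℝ)) (𝓝 (s*(s+1)/2)) := by
    have := (hNd2cont.tendsto.mono_left
      (nhdsWithin_le_nhds (s := Ioi (0:ℝ)))).div_const 2
    rwa [hNd2val] at this
  have hNd1_0 : Tendsto (Nd1 s) (𝓝[>](0:ℝ)) (𝓝 0) := by
    have := ((hasDerivAt_Nd1 s (show (0:ℝ) < 1 by norm_num)).continuousAt).tendsto.mono_left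
      (nhdsWithin_le_nhds (s := Ioi (0:ℝ)))
    have hv : Nd1 s 0 = 0 := by simp [Nd1, Real.one_rpow]
    rwa [hv] at this
  have h2 : Tendsto (fun r => Nd1 s r / (2*r)) (𝓝[>](0:ℝ)) (𝓝 (s*(s+1)/2)) := by
    apply HasDerivAt.lhopital_zero_right_on_Ioo one_pos
      (f' := Nd2 s) (g' := fun _ => 2)
      (fun x hx => hasDerivAt_Nd1 s hx.2)
      (fun x _ => by simpa using (hasDerivAt_id x).const_mul 2)
      (fun x _ => two_ne_zero)
      hNd1_0
      ?_ hdiv2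
    · have : Tendsto (fun r : ℝ => 2*r) (𝓝 0) (𝓝 (2*0)) := by
        exact (continuous_const.mul continuous_id).tendsto 0
      simpa using this.mono_left nhdsWithin_le_nhds
  have hNf_0 : Tendsto (Nf s) (𝓝[>](0:ℝ)) (𝓝 0) := by
    have := ((hasDerivAt_Nf s (show (0:ℝ) < 1 by norm_num)).continuousAt).tendsto.mono_left
      (nhdsWithin_le_nhds (s := Ioi (0:ℝ)))
    have hv : Nf s 0 = 0 := by simp [Nf, Real.one_rpow]
    rwa [hv] at this
  apply HasDerivAt.lhopital_zero_right_on_Ioo one_pos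
    (f' := Nd1 s) (g' := fun x => 2*x)
    (fun x hx => hasDerivAt_Nf s hx.2)
    (fun x _ => by simpa using hasDerivAt_pow 2 x)
    (fun x hx => by have := hx.1; positivity)
    hNf_0
    ?_ h2
  · have : Tendsto (fun r : ℝ => r^2) (𝓝 0) (𝓝 (0^2)) := (continuous_pow 2).tendsto 0
    simpa using this.mono_left nhdsWithin_le_nhds

lemma tendsto_Fd1_zero {s : ℝ} (hs0 : 0 < s) (hs1 : s < 1) :
    Tendsto (Fd1 s) (𝓝[>](0:ℝ)) (𝓝 (s*(s+1)/2)) := by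
  have hy : Tendsto (fun r : ℝ => (1-r)^(-s)) (𝓝[>](0:ℝ)) (𝓝 1) := by
    have := (contAt_omr (-s) 0 (by norm_num)).tendsto.mono_left
      (nhdsWithin_le_nhds (s := Ioi (0:ℝ)))
    simpa [Real.one_rpow] using this
  have := (tendsto_Nf_div hs0 hs1).mul hy
  exact (by simpa using this : Tendsto (fun x => Nf s x / x ^ 2 * (1 - x) ^ (-s)) (𝓝[>] 0) (𝓝 (s * (s + 1) / 2)))

lemma tendsto_Fd1_one {s : ℝ} (hs0 : 0 < s) (hs1 : s < 1) :
    Tendsto (Fd1 s) (𝓝[<](1:ℝ)) atBot := by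
  have hbase : Tendsto (fun r : ℝ => 1-r) (𝓝 1) (𝓝 0) := by
    have : Continuous (fun r : ℝ => 1 - r) := by fun_prop
    simpa using this.tendsto (1:ℝ)
  have hA : Tendsto (fun r : ℝ => (1-r)^s) (𝓝 1) (𝓝 0) := by
    have hc0 : ContinuousAt (fun x : ℝ => x^s) 0 :=
      Real.continuousAt_rpow_const 0 s (Or.inr hs0.le)
    have := hc0.tendsto.comp hbase
    simpa [Real.zero_rpow hs0.ne', Function.comp_def] using this
  have hNf1 : Tendsto (Nf s) (𝓝[<](1:ℝ)) (𝓝 (2*s-2)) := by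
    have hpoly : Tendsto (fun r : ℝ => (s-1)*r^2 + s*r - 1) (𝓝 1) (𝓝 ((s-1)*1^2 + s*1 - 1)) := by
      exact (Continuous.tendsto (by fun_prop) 1)
    have hsq : Tendsto (fun r : ℝ => 1+r^2) (𝓝 1) (𝓝 (1+1^2)) :=
      (Continuous.tendsto (by fun_prop) 1)
    have := (hsq.mul hA).add hpoly
    have heq : ((1:ℝ)+1^2) * 0 + ((s-1)*1^2 + s*1 - 1) = 2*s-2 := by ring
    rw [heq] at this
    exact (this.mono_left (nhdsWithin_le_nhds (s := Iio (1:ℝ)))).congr (fun r => by unfold Nf; ring)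
  have ht1 : Tendsto (fun r : ℝ => Nf s r / r^2) (𝓝[<](1:ℝ)) (𝓝 (2*s-2)) := by
    have hr2 : Tendsto (fun r : ℝ => r^2) (𝓝[<](1:ℝ)) (𝓝 1) := by
      have := (continuous_pow 2).tendsto (1:ℝ)
      simpa using this.mono_left (nhdsWithin_le_nhds (s := Iio (1:ℝ)))
    have := hNf1.div hr2 one_ne_zero
    simpa [Pi.div_def] using this
  have hinv : Tendsto (fun r : ℝ => (1-r)^(-s)) (𝓝[<](1:ℝ)) atTop := by
    have hA' : Tendsto (fun r : ℝ => (1-r)^s) (𝓝[<](1:ℝ)) (𝓝[>](0:ℝ)) := by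
      rw [tendsto_nhdsWithin_iff]
      refine ⟨hA.mono_left (nhdsWithin_le_nhds (s := Iio (1:ℝ))), ?_⟩
      filter_upwards [self_mem_nhdsWithin] with r hr
      exact rpow_pos_of_pos (by simp only [mem_Iio] at hr; linarith) s
    have := hA'.inv_tendsto_nhdsGT_zero
    apply this.congr'
    filter_upwards [self_mem_nhdsWithin] with r hr
    simp only [Pi.inv_apply]
    rw [← Real.rpow_neg (by simp only [mem_Iio] at hr; linarith)]
  have := Filter.Tendsto.neg_mul_atTop (C := 2*s-2) (by linarith) ht1 hinv
  exact this

theorem stmt13 (s : ℝ) (hs0 : 0 < s) (hs1 : s < 1) :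
    (∀ r ∈ Ioo (0:ℝ) 1,
      deriv (deriv (fun r : ℝ => ((1+r)*(1-r)^(1-s) - (1-r^2))/r)) r ≤ 0) ∧
    Tendsto (deriv (fun r : ℝ => ((1+r)*(1-r)^(1-s) - (1-r^2))/r))
      (nhdsWithin 0 (Ioi 0)) (nhds (s*(s+1)/2)) ∧
    Tendsto (deriv (fun r : ℝ => ((1+r)*(1-r)^(1-s) - (1-r^2))/r))
      (nhdsWithin 1 (Iio 1)) atBot ∧
    ∃! r : ℝ, r ∈ Ioo (0:ℝ) 1 ∧
      (1-r)^(-s) * (r^2*(1-r)^s + r^2*s - r^2 + (1-r)^s + r*s - 1) / r^2 = 0 ∧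
      ∀ r' ∈ Ioo (0:ℝ) 1,
        ((1+r')*(1-r')^(1-s) - (1-r'^2))/r' ≤ ((1+r)*(1-r)^(1-s) - (1-r^2))/r := by
  set F := fun r : ℝ => ((1+r)*(1-r)^(1-s) - (1-r^2))/r with hF
  have hderiv : ∀ r ∈ Ioo (0:ℝ) 1, deriv F r = Fd1 s r := fun r hr => (hasDerivAt_F s hr).deriv
  have hanti : StrictAntiOn (Fd1 s) (Ioo (0:ℝ) 1) := by
    apply strictAntiOn_of_deriv_neg (convex_Ioo 0 1)
    · exact fun x hx => (hasDerivAt_Fd1 s hx).continuousAt.continuousWithinAt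
    · intro x hx
      rw [interior_Ioo] at hx
      rw [(hasDerivAt_Fd1 s hx).deriv]
      exact Fd2_neg hs0 hs1 hx
  refine ⟨?_, ?_, ?_, ?_⟩
  · -- concavity
    intro r hr
    have hev : deriv F =ᶠ[𝓝 r] Fd1 s :=
      Filter.eventually_of_mem (isOpen_Ioo.mem_nhds hr) hderiv
    rw [hev.deriv_eq, (hasDerivAt_Fd1 s hr).deriv]
    exact (Fd2_neg hs0 hs1 hr).le
  · -- limit at 0+
    apply (tendsto_Fd1_zero hs0 hs1).congr'
    filter_upwards [Ioo_mem_nhdsGT_of_mem (left_mem_Ico.mpr one_pos)] with r hr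
    exact (hderiv r hr).symm
  · -- limit at 1-
    apply (tendsto_Fd1_one hs0 hs1).congr'
    filter_upwards [Ioo_mem_nhdsLT_of_mem ⟨one_pos, le_refl 1⟩] with r hr
    exact (hderiv r hr).symm
  · -- unique maximizer
    have hpos : ∃ a ∈ Ioo (0:ℝ) 1, 0 < Fd1 s a := by
      have h1 : ∀ᶠ r in 𝓝[>](0:ℝ), 0 < Fd1 s r :=
        (tendsto_Fd1_zero hs0 hs1).eventually (eventually_gt_nhds (by positivity))
      have h2 : ∀ᶠ r in 𝓝[>](0:ℝ), r ∈ Ioo (0:ℝ) 1 :=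
        Ioo_mem_nhdsGT_of_mem (left_mem_Ico.mpr one_pos)
      obtain ⟨a, ha1, ha2⟩ := (h2.and h1).exists
      exact ⟨a, ha1, ha2⟩
    have hneg : ∃ b ∈ Ioo (0:ℝ) 1, Fd1 s b < 0 := by
      have h1 : ∀ᶠ r in 𝓝[<](1:ℝ), Fd1 s r < 0 :=
        (tendsto_Fd1_one hs0 hs1).eventually (eventually_lt_atBot 0)
      have h2 : ∀ᶠ r in 𝓝[<](1:ℝ), r ∈ Ioo (0:ℝ) 1 :=
        Ioo_mem_nhdsLT_of_mem ⟨one_pos, le_refl 1⟩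
      obtain ⟨b, hb1, hb2⟩ := (h2.and h1).exists
      exact ⟨b, hb1, hb2⟩
    obtain ⟨a, ha, hFa⟩ := hpos
    obtain ⟨b, hb, hFb⟩ := hneg
    have hab : a < b := by
      rcases lt_trichotomy a b with h | rfl | h
      · exact h
      · linarith
      · have := hanti hb ha h
        linarith
    have hsub : Icc a b ⊆ Ioo (0:ℝ) 1 := fun x hx =>
      ⟨lt_of_lt_of_le ha.1 hx.1, lt_of_le_of_lt hx.2 hb.2⟩
    have hcont : ContinuousOn (Fd1 s) (Icc a b) := fun x hx =>
      (hasDerivAt_Fd1 s (hsub hx)).continuousAt.continuousWithinAt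
    obtain ⟨r, hrab, hFr⟩ := intermediate_value_Ioo' hab.le hcont (⟨hFb, hFa⟩ : (0:ℝ) ∈ Ioo (Fd1 s b) (Fd1 s a))
    have hrmem : r ∈ Ioo (0:ℝ) 1 := hsub (Ioo_subset_Icc_self hrab)
    have hFcont : ∀ x ∈ Ioo (0:ℝ) 1, ContinuousAt F x := fun x hx =>
      (hasDerivAt_F s hx).continuousAt
    have hmax : ∀ r' ∈ Ioo (0:ℝ) 1, F r' ≤ F r := by
      intro r' hr'
      rcases lt_trichotomy r' r with h | h | h
      · have hs1' : Icc r' r ⊆ Ioo (0:ℝ) 1 := fun x hx =>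
          ⟨lt_of_lt_of_le hr'.1 hx.1, lt_of_le_of_lt hx.2 hrmem.2⟩
        have hmono : StrictMonoOn F (Icc r' r) := by
          apply strictMonoOn_of_deriv_pos (convex_Icc r' r)
          · exact fun x hx => (hFcont x (hs1' hx)).continuousWithinAt
          · intro x hx
            rw [interior_Icc] at hx
            have hxm : x ∈ Ioo (0:ℝ) 1 := hs1' (Ioo_subset_Icc_self hx)
            rw [hderiv x hxm]
            have := hanti hxm hrmem hx.2
            rwa [hFr] at this
        exact (hmono (left_mem_Icc.mpr h.le) (right_mem_Icc.mpr h.le) h).le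
      · rw [h]
      · have hs1' : Icc r r' ⊆ Ioo (0:ℝ) 1 := fun x hx =>
          ⟨lt_of_lt_of_le hrmem.1 hx.1, lt_of_le_of_lt hx.2 hr'.2⟩
        have hmono : StrictAntiOn F (Icc r r') := by
          apply strictAntiOn_of_deriv_neg (convex_Icc r r')
          · exact fun x hx => (hFcont x (hs1' hx)).continuousWithinAt
          · intro x hx
            rw [interior_Icc] at hx
            have hxm : x ∈ Ioo (0:ℝ) 1 := hs1' (Ioo_subset_Icc_self hx)
            rw [hderiv x hxm]
            have := hanti hrmem hxm hx.1
            rwa [hFr] at this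
        exact (hmono (left_mem_Icc.mpr h.le) (right_mem_Icc.mpr h.le) h).le
    refine ⟨r, ⟨hrmem, ?_, hmax⟩, ?_⟩
    · have h1 : (0:ℝ) < 1 - r := by linarith [hrmem.2]
      have hNf0 : Nf s r = 0 := by
        have hne1 : ((1:ℝ)-r)^(-s) ≠ 0 := (rpow_pos_of_pos h1 (-s)).ne'
        have hne2 : r^2 ≠ 0 := by have := hrmem.1; positivity
        have h0 := hFr
        unfold Fd1 at h0
        rcases mul_eq_zero.mp h0 with h' | h'
        · rcases div_eq_zero_iff.mp h' with h'' | h''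
          · exact h''
          · exact absurd h'' hne2
        · exact absurd h' hne1
      have hM : r^2*(1-r)^s + r^2*s - r^2 + (1-r)^s + r*s - 1 = 0 := by
        unfold Nf at hNf0; linear_combination hNf0
      rw [hM]
      simp
    · rintro r'' ⟨hmem'', hG'', hmax''⟩
      have h1'' : (0:ℝ) < 1 - r'' := by linarith [hmem''.2]
      have hne1 : ((1:ℝ)-r'')^(-s) ≠ 0 := (rpow_pos_of_pos h1'' (-s)).ne'
      have hne2 : r''^2 ≠ 0 := by have := hmem''.1; positivity
      have hM : r''^2*(1-r'')^s + r''^2*s - r''^2 + (1-r'')^s + r''*s - 1 = 0 := by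
        rcases div_eq_zero_iff.mp hG'' with h' | h'
        · rcases mul_eq_zero.mp h' with h'' | h''
          · exact absurd h'' hne1
          · exact h''
        · exact absurd h' hne2
      have hFd1'' : Fd1 s r'' = 0 := by
        unfold Fd1 Nf
        rw [show (1+r''^2)*(1-r'')^s + (s-1)*r''^2 + s*r'' - 1 = 0 by linear_combination hM]
        simp
      exact hanti.injOn hmem'' hrmem (hFd1''.trans hFr.symm)
end

section
/- Let 0 < s ≤ 1 and let g be analytic and locally univalent on the unit disk with g(0)=0, g'(0)=1, and 1 + z g''(z)/g'(z) subordinate to 1/(1-z)^s. Then the pre-Schwarzian norm satisfies ‖P_g‖ ≤ 2 when s = 1, and ‖P_g‖ ≤ ((1+r_s)(1-r_s)^{1-s} - (1-r_s^2))/r_s when 0 < s < 1, where r_s is the unique root in (0,1) of r^2(1-r)^s + r^2 s - r^2 + (1-r)^s + r s - 1 = 0. Moreover these bounds are sharp. -/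
open Real Set Metric

/-- The class `C_hyp`: analytic locally univalent `g` on the unit disk, normalized,
with `1 + z g''/g'` subordinate to `1/(1-z)^s`. -/
def CHyp (s : ℝ) (g : ℂ → ℂ) : Prop :=
  DifferentiableOn ℂ g (ball 0 1) ∧ g 0 = 0 ∧ deriv g 0 = 1 ∧
  (∀ z ∈ ball (0:ℂ) 1, deriv g z ≠ 0) ∧
  ∃ ω : ℂ → ℂ, DifferentiableOn ℂ ω (ball 0 1) ∧ ω 0 = 0 ∧
    (∀ z ∈ ball (0:ℂ) 1, ‖ω z‖ < 1) ∧
    ∀ z ∈ ball (0:ℂ) 1,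
      1 + z * deriv (deriv g) z / deriv g z = (1 - ω z) ^ (-((s:ℂ)))

/-- The set of values `(1-|z|²)|g''(z)/g'(z)|`, whose supremum is the pre-Schwarzian norm. -/
def preSchwarzianSet (g : ℂ → ℂ) : Set ℝ :=
  {x | ∃ z ∈ ball (0:ℂ) 1, x = (1 - ‖z‖^2) * ‖deriv (deriv g) z / deriv g z‖}

section Aux
open Complex intervalIntegral MeasureTheory Interval

noncomputable def hh (s r : ℝ) : ℝ := (1 - r^2) * ((1-r) ^ (-s) - 1) / r
noncomputable def ph (s r : ℝ) : ℝ := (1+r^2)*(1-r)^s + (r^2+r)*s - r^2 - 1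
noncomputable def ph1 (s r : ℝ) : ℝ :=
  2*r*(1-r)^s - s*(1+r^2)*(1-r)^(s-1) + (2*r+1)*s - 2*r
noncomputable def ph2 (s r : ℝ) : ℝ :=
  2*(1-r)^s - 4*r*s*(1-r)^(s-1) + s*(s-1)*(1+r^2)*(1-r)^(s-2) + 2*s - 2

lemma ph_eq (s t : ℝ) :
    ph s t = t^2*(1-t)^s + t^2*s - t^2 + (1-t)^s + t*s - 1 := by
  unfold ph; ring

lemma hasDerivAt_one_sub_rpow {r : ℝ} (c : ℝ) (hr : r < 1) :
    HasDerivAt (fun r : ℝ => (1-r)^c) (c * (1-r)^(c-1) * (-1)) r := by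
  have hb : HasDerivAt (fun r : ℝ => 1 - r) (-1) r := (hasDerivAt_id r).const_sub 1
  have h0 : (1:ℝ) - r ≠ 0 := by intro h'; nlinarith [h']
  have := hb.rpow_const (p := c) (Or.inl h0)
  convert this using 1
  ring

lemma hasDerivAt_ph {s r : ℝ} (hr : r < 1) : HasDerivAt (ph s) (ph1 s r) r := by
  have B := hasDerivAt_one_sub_rpow s hr
  have A : HasDerivAt (fun x : ℝ => 1 + x^2) ((2:ℕ) * r^(2-1)) r :=
    (hasDerivAt_pow 2 r).const_add 1
  have C : HasDerivAt (fun x : ℝ => (x^2+x)*s) (((2:ℕ) * r^(2-1) + 1) * s) r :=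
    ((hasDerivAt_pow 2 r).add (hasDerivAt_id' (𝕜 := ℝ) r)).mul_const s
  have total := (((A.mul B).add C).sub (hasDerivAt_pow 2 r)).sub_const 1
  have heq : ph s = fun x : ℝ => (1+x^2)*(1-x)^s + (x^2+x)*s - x^2 - 1 := rfl
  rw [heq]
  refine total.congr_deriv ?_
  unfold ph1; push_cast; ring

lemma hasDerivAt_ph1 {s r : ℝ} (hr : r < 1) : HasDerivAt (ph1 s) (ph2 s r) r := by
  have B := hasDerivAt_one_sub_rpow s hr
  have B1 := hasDerivAt_one_sub_rpow (s-1) hr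
  have T1 : HasDerivAt (fun x : ℝ => 2*x*(1-x)^s)
      (2*(1-r)^s + (2*r)*(s * (1-r)^(s-1) * (-1))) r := by
    have := ((hasDerivAt_id' (𝕜 := ℝ) r).const_mul 2).mul B
    refine this.congr_deriv ?_; ring
  have T2 : HasDerivAt (fun x : ℝ => s*(1+x^2)*(1-x)^(s-1))
      ((s*((2:ℕ)*r^(2-1)))*(1-r)^(s-1) + (s*(1+r^2))*((s-1) * (1-r)^(s-1-1) * (-1))) r := by
    have hA : HasDerivAt (fun x : ℝ => s*(1+x^2)) (s*((2:ℕ) * r^(2-1))) r :=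
      ((hasDerivAt_pow 2 r).const_add 1).const_mul s
    exact hA.mul B1
  have T3 : HasDerivAt (fun x : ℝ => (2*x+1)*s) (2 * 1 * s) r :=
    (((hasDerivAt_id' (𝕜 := ℝ) r).const_mul 2).add_const 1).mul_const s
  have T4 : HasDerivAt (fun x : ℝ => 2*x) (2*1) r := (hasDerivAt_id' (𝕜 := ℝ) r).const_mul 2
  have total := ((T1.sub T2).add T3).sub T4
  have heq : ph1 s = fun x : ℝ => 2*x*(1-x)^s - s*(1+x^2)*(1-x)^(s-1) + (2*x+1)*s - 2*x := rfl
  rw [heq]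
  refine total.congr_deriv ?_
  unfold ph2
  rw [show s - 1 - 1 = s - 2 by ring]
  push_cast; ring

lemma ph2_pos {s r : ℝ} (hs0 : 0 < s) (hs1 : s ≤ 1) (hr0 : 0 < r) (hr4 : r < s/4) :
    0 < ph2 s r := by
  have hr1 : r < 1 := by nlinarith
  have h1r : 0 < 1 - r := by linarith
  set u := (1-r)^(s-2) with hu
  have hu1 : 1 ≤ u :=
    Real.one_le_rpow_of_pos_of_le_one_of_nonpos h1r (by linarith) (by linarith)
  have e1 : (1-r)^s = u * (1-r)^2 := by
    rw [hu, ← Real.rpow_natCast (1-r) 2, ← Real.rpow_add h1r]; norm_num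
  have e2 : (1-r)^(s-1) = u * (1-r) := by
    rw [hu, show s - 1 = (s-2) + 1 by ring, Real.rpow_add h1r, Real.rpow_one]
  have hQ : 0 < (1+s)*(s - 4*r + (2+s)*r^2) := by
    apply mul_pos (by linarith)
    nlinarith [sq_nonneg r]
  have hP : 0 < 2*(1-r)^2 - 4*r*s*(1-r) - s*(1-s)*(1+r^2) := by nlinarith
  have hval : ph2 s r = u * (2*(1-r)^2 - 4*r*s*(1-r) - s*(1-s)*(1+r^2)) + (2*s - 2) := by
    unfold ph2; rw [e1, e2]; ring
  have hup : (2*(1-r)^2 - 4*r*s*(1-r) - s*(1-s)*(1+r^2)) ≤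
      u * (2*(1-r)^2 - 4*r*s*(1-r) - s*(1-s)*(1+r^2)) :=
    le_mul_of_one_le_left hP.le hu1
  rw [hval]
  nlinarith

lemma ph_zero (s : ℝ) : ph s 0 = 0 := by
  unfold ph; norm_num [Real.one_rpow]

lemma ph1_zero (s : ℝ) : ph1 s 0 = 0 := by
  unfold ph1; norm_num [Real.one_rpow]

lemma ph_pos_small {s r : ℝ} (hs0 : 0 < s) (hs1 : s ≤ 1) (hr0 : 0 < r) (hr4 : r < s/4) :
    0 < ph s r := by
  have hr1 : r < 1 := by nlinarith
  -- ph1 is positive on (0, r]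
  have hmono1 : StrictMonoOn (ph1 s) (Icc 0 r) := by
    apply strictMonoOn_of_deriv_pos (convex_Icc 0 r)
    · intro x hx
      exact (hasDerivAt_ph1 (lt_of_le_of_lt hx.2 hr1)).continuousAt.continuousWithinAt
    · intro x hx
      rw [interior_Icc] at hx
      rw [(hasDerivAt_ph1 (lt_trans hx.2 hr1)).deriv]
      exact ph2_pos hs0 hs1 hx.1 (lt_trans hx.2 hr4)
  have h1pos : ∀ x ∈ Ioc (0:ℝ) r, 0 < ph1 s x := by
    intro x hx
    have := hmono1 ⟨le_refl 0, hr0.le⟩ ⟨hx.1.le, hx.2⟩ hx.1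
    rwa [ph1_zero] at this
  have hmono : StrictMonoOn (ph s) (Icc 0 r) := by
    apply strictMonoOn_of_deriv_pos (convex_Icc 0 r)
    · intro x hx
      exact (hasDerivAt_ph (lt_of_le_of_lt hx.2 hr1)).continuousAt.continuousWithinAt
    · intro x hx
      rw [interior_Icc] at hx
      rw [(hasDerivAt_ph (lt_trans hx.2 hr1)).deriv]
      exact h1pos x ⟨hx.1, hx.2.le⟩
  have := hmono ⟨le_refl 0, hr0.le⟩ ⟨hr0.le, le_refl r⟩ hr0
  rwa [ph_zero] at this

lemma ph_continuous {s : ℝ} (hs0 : 0 < s) : Continuous (ph s) := by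
  have hc : Continuous (fun r : ℝ => (1-r)^s) := by
    apply continuous_iff_continuousAt.2
    intro x
    exact (Real.continuousAt_rpow_const (1-x) s (Or.inr hs0.le)).comp
      ((continuous_const.sub continuous_id).continuousAt)
  unfold ph
  continuity

lemma ph_one {s : ℝ} (hs0 : 0 < s) : ph s 1 = 2*s - 2 := by
  unfold ph; rw [sub_self, Real.zero_rpow hs0.ne']; ring

section signs
variable {s rs : ℝ}

lemma ph_pos_left (hs0 : 0 < s) (hs1 : s ≤ 1) (hrs : rs ∈ Ioo (0:ℝ) 1)
    (huniq : ∀ t ∈ Ioo (0:ℝ) 1, ph s t = 0 → t = rs) :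
    ∀ r ∈ Ioo (0:ℝ) rs, 0 < ph s r := by
  intro r hr
  set r₀ : ℝ := min rs (s/4) / 2 with hr₀def
  have hmin : 0 < min rs (s/4) := lt_min hrs.1 (by linarith)
  have hr₀0 : 0 < r₀ := by positivity
  have hr₀rs : r₀ < rs := by
    have h1 : min rs (s/4) ≤ rs := min_le_left _ _
    have := hmin
    rw [hr₀def]; linarith
  have hr₀4 : r₀ < s/4 := by
    have h1 : min rs (s/4) ≤ s/4 := min_le_right _ _
    have := hmin
    rw [hr₀def]; linarith
  have hpos₀ : 0 < ph s r₀ := ph_pos_small hs0 hs1 hr₀0 hr₀4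
  rcases lt_trichotomy (ph s r) 0 with hneg | hzero | hpos
  · exfalso
    have hivt := intermediate_value_uIcc (a := r₀) (b := r)
      ((ph_continuous hs0).continuousOn (s := Set.uIcc r₀ r))
    have h0mem : (0:ℝ) ∈ Set.uIcc (ph s r₀) (ph s r) := by
      rw [Set.mem_uIcc]; right; exact ⟨hneg.le, hpos₀.le⟩
    obtain ⟨c, hc, hc0⟩ := hivt h0mem
    rw [Set.mem_uIcc] at hc
    have hcIoo : c ∈ Ioo (0:ℝ) 1 ∧ c < rs := by
      rcases hc with h | h
      · exact ⟨⟨lt_of_lt_of_le hr₀0 h.1, lt_trans (lt_of_le_of_lt h.2 hr.2) hrs.2⟩,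
          lt_of_le_of_lt h.2 hr.2⟩
      · exact ⟨⟨lt_of_lt_of_le hr.1 h.1, lt_trans (lt_of_le_of_lt h.2 hr₀rs) hrs.2⟩,
          lt_of_le_of_lt h.2 hr₀rs⟩
    have := huniq c hcIoo.1 hc0
    rw [this] at hcIoo
    exact lt_irrefl rs hcIoo.2
  · exfalso
    have := huniq r ⟨hr.1, lt_trans hr.2 hrs.2⟩ hzero
    rw [this] at hr
    exact lt_irrefl rs hr.2
  · exact hpos

lemma ph_neg_right (hs0 : 0 < s) (hs1 : s < 1) (hrs : rs ∈ Ioo (0:ℝ) 1)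
    (huniq : ∀ t ∈ Ioo (0:ℝ) 1, ph s t = 0 → t = rs) :
    ∀ r ∈ Ioo rs (1:ℝ), ph s r < 0 := by
  intro r hr
  have hr0 : 0 < r := lt_trans hrs.1 hr.1
  rcases lt_trichotomy (ph s r) 0 with hneg | hzero | hpos
  · exact hneg
  · exfalso
    have := huniq r ⟨hr0, hr.2⟩ hzero
    rw [this] at hr
    exact lt_irrefl rs hr.1
  · exfalso
    have hivt := intermediate_value_uIcc (a := r) (b := 1)
      ((ph_continuous hs0).continuousOn (s := Set.uIcc r 1))
    have h0mem : (0:ℝ) ∈ Set.uIcc (ph s r) (ph s 1) := by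
      rw [ph_one hs0, Set.mem_uIcc]; right
      constructor <;> linarith
    obtain ⟨c, hc, hc0⟩ := hivt h0mem
    rw [Set.uIcc_of_le hr.2.le, Set.mem_Icc] at hc
    have hc1 : c < 1 := by
      rcases lt_or_eq_of_le hc.2 with h | h
      · exact h
      · exfalso; rw [h, ph_one hs0] at hc0; linarith
    have := huniq c ⟨lt_of_lt_of_le hr0 hc.1, hc1⟩ hc0
    rw [this] at hc
    linarith [hc.1, hr.1]

end signs

lemma hasDerivAt_hh {s r : ℝ} (hr : r ∈ Ioo (0:ℝ) 1) :
    HasDerivAt (hh s) (ph s r * (1-r)^(-s) / r^2) r := by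
  obtain ⟨hr0, hr1⟩ := hr
  have h1r : 0 < 1 - r := by linarith
  have hB := hasDerivAt_one_sub_rpow (-s) hr1
  have hu : HasDerivAt (fun r : ℝ => (1 - r^2) * ((1-r)^(-s) - 1))
      ((-((2:ℕ) * r^(2-1))) * ((1-r)^(-s) - 1) + (1 - r^2) * ((-s) * (1-r)^(-s-1) * (-1))) r := by
    exact ((hasDerivAt_pow 2 r).const_sub 1).mul (hB.sub_const 1)
  have hv : HasDerivAt (fun r : ℝ => r) 1 r := hasDerivAt_id' r
  have hdiv := hu.div hv hr0.ne'
  have heq : hh s = fun r : ℝ => (1 - r^2) * ((1-r)^(-s) - 1) / r := rfl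
  rw [heq]
  refine hdiv.congr_deriv ?_
  have hXpos : (0:ℝ) < (1-r)^s := Real.rpow_pos_of_pos h1r s
  have eY : (1-r)^(-s) = ((1-r)^s)⁻¹ := Real.rpow_neg h1r.le s
  have eZ : (1-r)^(-s-1) = ((1-r)^s)⁻¹ / (1-r) := by
    rw [show -s-1 = -s - 1 by ring, Real.rpow_sub h1r, Real.rpow_one, eY]
  rw [eY, eZ]
  unfold ph
  field_simp
  ring

lemma hh_le_hh_rs {s rs : ℝ} (hs0 : 0 < s) (hs1 : s < 1) (hrs : rs ∈ Ioo (0:ℝ) 1)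
    (huniq : ∀ t ∈ Ioo (0:ℝ) 1, ph s t = 0 → t = rs) :
    ∀ r ∈ Ioo (0:ℝ) 1, hh s r ≤ hh s rs := by
  intro r hr
  have hposL := ph_pos_left hs0 hs1.le hrs huniq
  have hnegR := ph_neg_right hs0 hs1 hrs huniq
  rcases lt_trichotomy r rs with hlt | heq | hgt
  · have hmono : StrictMonoOn (hh s) (Icc r rs) := by
      apply strictMonoOn_of_deriv_pos (convex_Icc r rs)
      · intro x hx
        have hx' : x ∈ Ioo (0:ℝ) 1 := ⟨lt_of_lt_of_le hr.1 hx.1, lt_of_le_of_lt hx.2 hrs.2⟩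
        exact (hasDerivAt_hh hx').continuousAt.continuousWithinAt
      · intro x hx
        rw [interior_Icc] at hx
        have hx' : x ∈ Ioo (0:ℝ) 1 := ⟨lt_trans hr.1 hx.1, lt_trans hx.2 hrs.2⟩
        rw [(hasDerivAt_hh hx').deriv]
        have h1 : 0 < ph s x := hposL x ⟨hx'.1, hx.2⟩
        have h2 : (0:ℝ) < (1-x)^(-s) := Real.rpow_pos_of_pos (by linarith [hx'.2]) _
        exact div_pos (mul_pos h1 h2) (pow_pos hx'.1 2)
    exact (hmono ⟨le_refl r, hlt.le⟩ ⟨hlt.le, le_refl rs⟩ hlt).le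
  · rw [heq]
  · have hmono : StrictAntiOn (hh s) (Icc rs r) := by
      apply strictAntiOn_of_deriv_neg (convex_Icc rs r)
      · intro x hx
        have hx' : x ∈ Ioo (0:ℝ) 1 := ⟨lt_of_lt_of_le hrs.1 hx.1, lt_of_le_of_lt hx.2 hr.2⟩
        exact (hasDerivAt_hh hx').continuousAt.continuousWithinAt
      · intro x hx
        rw [interior_Icc] at hx
        have hx' : x ∈ Ioo (0:ℝ) 1 := ⟨lt_trans hrs.1 hx.1, lt_trans hx.2 hr.2⟩
        rw [(hasDerivAt_hh hx').deriv]
        have h1 : ph s x < 0 := hnegR x ⟨hx.1, hx'.2⟩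
        have h2 : (0:ℝ) < (1-x)^(-s) := Real.rpow_pos_of_pos (by linarith [hx'.2]) _
        have h3 : (0:ℝ) < x^2 := pow_pos hx'.1 2
        exact div_neg_of_neg_of_pos (mul_neg_of_neg_of_pos h1 h2) h3
    exact (hmono ⟨le_refl rs, hgt.le⟩ ⟨hgt.le, le_refl r⟩ hgt).le

lemma exists_primitive {f : ℂ → ℂ} (hf : DifferentiableOn ℂ f (ball 0 1)) :
    ∃ F : ℂ → ℂ, F 0 = 0 ∧ ∀ z ∈ ball (0:ℂ) 1, HasDerivAt F (f z) z := by
  have hfa : AnalyticOnNhd ℂ f (ball 0 1) := hf.analyticOnNhd isOpen_ball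
  have hfc : ContinuousOn f (ball 0 1) := hf.continuousOn
  have hf'a : AnalyticOnNhd ℂ (deriv f) (ball 0 1) := hfa.deriv
  have hf'c : ContinuousOn (deriv f) (ball 0 1) := hf'a.continuousOn
  have hmem : ∀ {t : ℝ} {x : ℂ}, t ∈ Set.Icc (0:ℝ) 1 → x ∈ ball (0:ℂ) 1 →
      (t : ℂ) * x ∈ ball (0:ℂ) 1 := by
    intro t x ht hx
    rw [mem_ball_zero_iff] at hx ⊢
    calc ‖(t:ℂ) * x‖ = |t| * ‖x‖ := by
          rw [norm_mul, Complex.norm_real, Real.norm_eq_abs]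
      _ ≤ 1 * ‖x‖ := by
          apply mul_le_mul_of_nonneg_right _ (norm_nonneg _)
          rw [abs_le]; constructor <;> linarith [ht.1, ht.2]
      _ < 1 := by rw [one_mul]; exact hx
  set F : ℂ → ℂ := fun x => ∫ t in (0:ℝ)..1, x * f ((t:ℂ) * x) with hF
  refine ⟨F, by simp [hF], ?_⟩
  intro z₀ hz₀
  rw [mem_ball_zero_iff] at hz₀
  set ε : ℝ := (1 - ‖z₀‖) / 2 with hε
  have hε0 : 0 < ε := by rw [hε]; linarith
  have hr : ∀ x ∈ ball z₀ ε, ‖x‖ < (1 + ‖z₀‖) / 2 := by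
    intro x hx
    rw [mem_ball, dist_eq_norm] at hx
    calc ‖x‖ ≤ ‖x - z₀‖ + ‖z₀‖ := by simpa using norm_add_le (x - z₀) z₀
      _ < ε + ‖z₀‖ := by linarith
      _ = (1 + ‖z₀‖) / 2 := by rw [hε]; ring
  have hrlt : (1 + ‖z₀‖) / 2 < 1 := by linarith
  have hballs : ball z₀ ε ⊆ ball (0:ℂ) 1 := by
    intro x hx
    rw [mem_ball_zero_iff]
    exact (hr x hx).trans hrlt
  -- bounds on compact set
  obtain ⟨C₁, hC₁⟩ := (isCompact_closedBall (0:ℂ) ((1+‖z₀‖)/2)).exists_bound_of_continuousOn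
    (hfc.mono (closedBall_subset_ball hrlt))
  obtain ⟨C₂, hC₂⟩ := (isCompact_closedBall (0:ℂ) ((1+‖z₀‖)/2)).exists_bound_of_continuousOn
    (hf'c.mono (closedBall_subset_ball hrlt))
  have hmem2 : ∀ {t : ℝ} {x : ℂ}, t ∈ Ι (0:ℝ) 1 → x ∈ ball z₀ ε →
      (t:ℂ) * x ∈ closedBall (0:ℂ) ((1+‖z₀‖)/2) := by
    intro t x ht hx
    rw [Set.uIoc_of_le (zero_le_one)] at ht
    rw [mem_closedBall_zero_iff]
    calc ‖(t:ℂ) * x‖ = |t| * ‖x‖ := by rw [norm_mul, Complex.norm_real, Real.norm_eq_abs]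
      _ ≤ 1 * ‖x‖ := mul_le_mul_of_nonneg_right (abs_le.2 ⟨by linarith [ht.1], ht.2⟩) (norm_nonneg _)
      _ ≤ (1+‖z₀‖)/2 := by rw [one_mul]; exact (hr x hx).le
  have key := intervalIntegral.hasDerivAt_integral_of_dominated_loc_of_deriv_le
    (F := fun x t => x * f ((t:ℂ) * x))
    (F' := fun x t => f ((t:ℂ) * x) + x * (deriv f ((t:ℂ) * x) * (t:ℂ)))
    (x₀ := z₀) (a := 0) (b := 1) (μ := volume)
    (bound := fun _ => C₁ + (C₂ + 1)) (ball_mem_nhds z₀ hε0) ?_ ?_ ?_ ?_ ?_ ?_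
  · obtain ⟨hint, hdF⟩ := key
    have : (∫ t in (0:ℝ)..1, (f ((t:ℂ) * z₀) + z₀ * (deriv f ((t:ℂ) * z₀) * (t:ℂ)))) = f z₀ := by
      have hG : ∀ t ∈ Set.uIcc (0:ℝ) 1,
          HasDerivAt (fun t : ℝ => (t:ℂ) * f ((t:ℂ) * z₀))
            (f ((t:ℂ) * z₀) + z₀ * (deriv f ((t:ℂ) * z₀) * (t:ℂ))) t := by
        intro t ht
        rw [Set.uIcc_of_le zero_le_one] at ht
        have htz : (t:ℂ) * z₀ ∈ ball (0:ℂ) 1 := hmem ht (mem_ball_zero_iff.2 hz₀)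
        have hdf : DifferentiableAt ℂ f ((t:ℂ) * z₀) :=
          hf.differentiableAt (isOpen_ball.mem_nhds htz)
        have h1 : HasDerivAt (fun w : ℂ => w * f (w * z₀))
            (1 * f ((t:ℂ) * z₀) + (t:ℂ) * (deriv f ((t:ℂ) * z₀) * z₀)) (t:ℂ) := by
          have hinner : HasDerivAt (fun w : ℂ => f (w * z₀)) (deriv f ((t:ℂ) * z₀) * z₀) (t:ℂ) := by
            have : HasDerivAt (fun w : ℂ => w * z₀) z₀ (t:ℂ) := by
              simpa using (hasDerivAt_id ((t:ℂ))).mul_const z₀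
            exact (hdf.hasDerivAt.comp ((t:ℂ)) this)
          refine ((hasDerivAt_id ((t:ℂ))).mul hinner).congr_deriv ?_; simp
        have := h1.comp_ofReal
        convert this using 1
        ring
      have := intervalIntegral.integral_eq_sub_of_hasDerivAt hG hint
      rw [this]
      simp
    rw [this] at hdF
    exact hdF
  · -- measurability for x near z₀
    filter_upwards [isOpen_ball.mem_nhds (mem_ball_self hε0)] with x hx
    apply ContinuousOn.aestronglyMeasurable _ measurableSet_uIoc
    intro t ht
    have := hmem2 ht hx
    apply ContinuousWithinAt.mul continuousWithinAt_const
    have hcont : ContinuousAt f ((t:ℂ) * x) := by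
      apply (hf.differentiableAt (isOpen_ball.mem_nhds (closedBall_subset_ball hrlt this))).continuousAt
    have hmul : ContinuousWithinAt (fun t : ℝ => (t:ℂ) * x) (Ι (0:ℝ) 1) t :=
      ((Complex.continuous_ofReal.continuousAt).mul continuousAt_const).continuousWithinAt
    exact ContinuousAt.comp_continuousWithinAt (f := fun t : ℝ => (t:ℂ) * x) hcont hmul
  · -- integrability at z₀
    apply ContinuousOn.intervalIntegrable
    intro t ht
    rw [Set.uIcc_of_le zero_le_one] at ht
    have htz : (t:ℂ) * z₀ ∈ ball (0:ℂ) 1 := hmem ht (mem_ball_zero_iff.2 hz₀)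
    apply ContinuousWithinAt.mul continuousWithinAt_const
    have hcont : ContinuousAt f ((t:ℂ) * z₀) :=
      (hf.differentiableAt (isOpen_ball.mem_nhds htz)).continuousAt
    have hmul : ContinuousWithinAt (fun t : ℝ => (t:ℂ) * z₀) (Set.uIcc (0:ℝ) 1) t :=
      ((Complex.continuous_ofReal.continuousAt).mul continuousAt_const).continuousWithinAt
    exact ContinuousAt.comp_continuousWithinAt (f := fun t : ℝ => (t:ℂ) * z₀) hcont hmul
  · -- measurability of F' z₀
    apply ContinuousOn.aestronglyMeasurable _ measurableSet_uIoc
    intro t ht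
    have htz := hmem2 ht (mem_ball_self hε0)
    have htz' : (t:ℂ) * z₀ ∈ ball (0:ℂ) 1 := closedBall_subset_ball hrlt htz
    have hcont : ContinuousAt f ((t:ℂ) * z₀) :=
      (hf.differentiableAt (isOpen_ball.mem_nhds htz')).continuousAt
    have hcont' : ContinuousAt (deriv f) ((t:ℂ) * z₀) :=
      (hf'a ((t:ℂ)*z₀) htz').continuousAt
    have hmul : ContinuousWithinAt (fun t : ℝ => (t:ℂ) * z₀) (Ι (0:ℝ) 1) t :=
      ((Complex.continuous_ofReal.continuousAt).mul continuousAt_const).continuousWithinAt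
    have c1 : ContinuousWithinAt (fun t : ℝ => f ((t:ℂ) * z₀)) (Ι (0:ℝ) 1) t :=
      ContinuousAt.comp_continuousWithinAt (f := fun t : ℝ => (t:ℂ) * z₀) hcont hmul
    have c2 : ContinuousWithinAt (fun t : ℝ => deriv f ((t:ℂ) * z₀)) (Ι (0:ℝ) 1) t :=
      ContinuousAt.comp_continuousWithinAt (f := fun t : ℝ => (t:ℂ) * z₀) hcont' hmul
    exact c1.add (continuousWithinAt_const.mul (c2.mul
      (Complex.continuous_ofReal.continuousAt.continuousWithinAt)))
  · -- bound
    apply Filter.Eventually.of_forall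
    intro t ht x hx
    have htz := hmem2 ht hx
    have h1 : ‖f ((t:ℂ)*x)‖ ≤ C₁ := hC₁ _ htz
    have h2 : ‖deriv f ((t:ℂ)*x)‖ ≤ C₂ := hC₂ _ htz
    have ht' : t ∈ Set.Ioc (0:ℝ) 1 := by rwa [Set.uIoc_of_le zero_le_one] at ht
    calc ‖f ((t:ℂ) * x) + x * (deriv f ((t:ℂ) * x) * (t:ℂ))‖
        ≤ ‖f ((t:ℂ) * x)‖ + ‖x * (deriv f ((t:ℂ) * x) * (t:ℂ))‖ := norm_add_le _ _
      _ ≤ C₁ + (C₂ + 1) := by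
          apply add_le_add h1
          have hx1 : ‖x‖ ≤ 1 := ((hr x hx).trans hrlt).le
          have ht1 : ‖(t:ℂ)‖ ≤ 1 := by
            rw [Complex.norm_real, Real.norm_eq_abs, abs_le]
            exact ⟨by linarith [ht'.1], ht'.2⟩
          have hC₂0 : 0 ≤ C₂ := le_trans (norm_nonneg _) h2
          calc ‖x * (deriv f ((t:ℂ) * x) * (t:ℂ))‖
              = ‖x‖ * (‖deriv f ((t:ℂ)*x)‖ * ‖(t:ℂ)‖) := by rw [norm_mul, norm_mul]
            _ ≤ 1 * (C₂ * 1) := by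
                apply mul_le_mul hx1 _ (by positivity) zero_le_one
                exact mul_le_mul h2 ht1 (norm_nonneg _) hC₂0
            _ ≤ C₂ + 1 := by linarith
  · exact intervalIntegrable_const
  · -- differentiability in x
    apply Filter.Eventually.of_forall
    intro t ht x hx
    have htz : (t:ℂ) * x ∈ ball (0:ℂ) 1 := closedBall_subset_ball hrlt (hmem2 ht hx)
    have hdf : DifferentiableAt ℂ f ((t:ℂ) * x) := hf.differentiableAt (isOpen_ball.mem_nhds htz)
    have hinner : HasDerivAt (fun x : ℂ => f ((t:ℂ) * x)) (deriv f ((t:ℂ) * x) * (t:ℂ)) x := by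
      have : HasDerivAt (fun x : ℂ => (t:ℂ) * x) (t:ℂ) x := by
        simpa using (hasDerivAt_id x).const_mul (t:ℂ)
      exact hdf.hasDerivAt.comp x this
    have := (hasDerivAt_id x).mul hinner
    refine this.congr_deriv ?_
    simp only [id_eq]
    ring

lemma key_ineq_s14 {s : ℝ} (hs0 : 0 < s) {w : ℂ} (hw : ‖w‖ < 1) :
    ‖(1 - w) ^ (-(s:ℂ)) - 1‖ ≤ (1 - ‖w‖) ^ (-s) - 1 := by
  have hw0 : (0:ℝ) ≤ ‖w‖ := norm_nonneg w
  have hpos : ∀ t : ℝ, t ∈ Set.Icc (0:ℝ) 1 → (0:ℝ) < 1 - t * ‖w‖ := by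
    intro t ht; nlinarith [ht.1, ht.2, hw0]
  have hne : ∀ t : ℝ, t ∈ Set.Icc (0:ℝ) 1 → (1 - (t:ℂ) * w) ≠ 0 := by
    intro t ht h0
    have : ‖(1:ℂ) - (t:ℂ)*w‖ ≥ 1 - t * ‖w‖ := by
      calc ‖(1:ℂ) - (t:ℂ)*w‖ ≥ ‖(1:ℂ)‖ - ‖(t:ℂ)*w‖ := norm_sub_norm_le _ _
        _ = 1 - t * ‖w‖ := by
            rw [norm_one, norm_mul, Complex.norm_real, Real.norm_eq_abs, _root_.abs_of_nonneg ht.1]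
    rw [h0, norm_zero] at this
    linarith [hpos t ht]
  have hslit : ∀ t : ℝ, t ∈ Set.Icc (0:ℝ) 1 → (1 - (t:ℂ) * w) ∈ Complex.slitPlane := by
    intro t ht
    rw [sub_eq_add_neg]
    apply Complex.mem_slitPlane_of_norm_lt_one
    rw [norm_neg, norm_mul, Complex.norm_real, Real.norm_eq_abs, _root_.abs_of_nonneg ht.1]
    nlinarith [ht.1, ht.2, hw0, hpos t ht]
  -- derivative of φ(t) = (1 - t w)^(-s)
  have hφ : ∀ t ∈ Set.uIcc (0:ℝ) 1,
      HasDerivAt (fun t : ℝ => (1 - (t:ℂ) * w) ^ (-(s:ℂ)))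
        ((-(s:ℂ)) * (1 - (t:ℂ) * w) ^ (-(s:ℂ) - 1) * (-w)) t := by
    intro t ht
    rw [Set.uIcc_of_le zero_le_one] at ht
    have hinner : HasDerivAt (fun z : ℂ => 1 - z * w) (-w) (t:ℂ) := by
      simpa using ((hasDerivAt_id ((t:ℂ))).mul_const w).const_sub 1
    have houter := hinner.cpow_const (c := -(s:ℂ)) (by simpa using hslit t ht)
    exact houter.comp_ofReal
  have hφ' : IntervalIntegrable
      (fun t : ℝ => (-(s:ℂ)) * (1 - (t:ℂ) * w) ^ (-(s:ℂ) - 1) * (-w)) MeasureTheory.volume 0 1 := by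
    apply ContinuousOn.intervalIntegrable
    intro t ht
    rw [Set.uIcc_of_le zero_le_one] at ht
    have hc : ContinuousWithinAt (fun t : ℝ => (1 - (t:ℂ) * w)) (Set.uIcc (0:ℝ) 1) t := by
      apply Continuous.continuousWithinAt; continuity
    have : ContinuousWithinAt (fun t : ℝ => (1 - (t:ℂ) * w) ^ (-(s:ℂ) - 1)) (Set.uIcc (0:ℝ) 1) t :=
      hc.cpow continuousWithinAt_const (by simpa using hslit t ht)
    exact (continuousWithinAt_const.mul this).mul continuousWithinAt_const
  have hFTC := intervalIntegral.integral_eq_sub_of_hasDerivAt hφ hφ'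
  have hval : (1 - w) ^ (-(s:ℂ)) - 1 =
      ∫ t in (0:ℝ)..1, (-(s:ℂ)) * (1 - (t:ℂ) * w) ^ (-(s:ℂ) - 1) * (-w) := by
    rw [hFTC]; norm_num [Complex.one_cpow]
  rw [hval]
  -- real comparison integrand
  have hψ : ∀ t ∈ Set.uIcc (0:ℝ) 1,
      HasDerivAt (fun t : ℝ => (1 - t * ‖w‖) ^ (-s))
        (s * ‖w‖ * (1 - t * ‖w‖) ^ (-s - 1)) t := by
    intro t ht
    rw [Set.uIcc_of_le zero_le_one] at ht
    have hinner : HasDerivAt (fun t : ℝ => 1 - t * ‖w‖) (-‖w‖) t := by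
      simpa using ((hasDerivAt_id t).mul_const ‖w‖).const_sub 1
    have houter := hinner.rpow_const (p := -s) (Or.inl (hpos t ht).ne')
    convert houter using 1
    ring
  have hψint : IntervalIntegrable (fun t : ℝ => s * ‖w‖ * (1 - t * ‖w‖) ^ (-s - 1))
      MeasureTheory.volume 0 1 := by
    apply ContinuousOn.intervalIntegrable
    intro t ht
    rw [Set.uIcc_of_le zero_le_one] at ht
    have hc : ContinuousWithinAt (fun t : ℝ => (1 - t * ‖w‖)) (Set.uIcc (0:ℝ) 1) t := by
      apply Continuous.continuousWithinAt; continuity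
    exact continuousWithinAt_const.mul (hc.rpow_const (Or.inl (hpos t ht).ne'))
  have hRHS := intervalIntegral.integral_eq_sub_of_hasDerivAt hψ hψint
  have hRHS' : (1 - ‖w‖) ^ (-s) - 1 =
      ∫ t in (0:ℝ)..1, s * ‖w‖ * (1 - t * ‖w‖) ^ (-s - 1) := by
    rw [hRHS]; norm_num
  rw [hRHS']
  -- compare
  have habs : |∫ t in (0:ℝ)..1, s * ‖w‖ * (1 - t * ‖w‖) ^ (-s - 1)| =
      ∫ t in (0:ℝ)..1, s * ‖w‖ * (1 - t * ‖w‖) ^ (-s - 1) := by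
    rw [_root_.abs_of_nonneg]
    rw [← hRHS']
    have : (1:ℝ) ≤ (1 - ‖w‖) ^ (-s) :=
      Real.one_le_rpow_of_pos_of_le_one_of_nonpos (by linarith) (by linarith) (by linarith)
    linarith
  rw [← habs]
  apply intervalIntegral.norm_integral_le_abs_of_norm_le _ hψint
  rw [MeasureTheory.ae_restrict_iff' measurableSet_uIoc]
  apply Filter.Eventually.of_forall
  intro t ht
  have ht' : t ∈ Set.Icc (0:ℝ) 1 := by
    rw [Set.uIoc_of_le zero_le_one] at ht
    exact ⟨ht.1.le, ht.2⟩
  have h1 : ‖(1 - (t:ℂ) * w) ^ (-(s:ℂ) - 1)‖ ≤ (1 - t * ‖w‖) ^ (-s - 1) := by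
    have habs : ‖((1 - (t:ℂ) * w) ^ (-(s:ℂ) - 1))‖ =
        ‖(1 - (t:ℂ) * w)‖ ^ (-s - 1) := by
      rw [Complex.norm_cpow_of_ne_zero (hne t ht')]
      norm_num
    rw [habs]
    have hlow : 1 - t * ‖w‖ ≤ ‖(1 - (t:ℂ) * w)‖ := by
      calc 1 - t * ‖w‖ = ‖(1:ℂ)‖ - ‖(t:ℂ)*w‖ := by
            rw [norm_one, norm_mul, Complex.norm_real, Real.norm_eq_abs, _root_.abs_of_nonneg ht'.1]
        _ ≤ ‖(1:ℂ) - (t:ℂ)*w‖ := norm_sub_norm_le _ _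
        _ = ‖(1 - (t:ℂ) * w)‖ := rfl
    exact Real.rpow_le_rpow_of_nonpos (hpos t ht') hlow (by linarith)
  calc ‖(-(s:ℂ)) * (1 - (t:ℂ) * w) ^ (-(s:ℂ) - 1) * (-w)‖
      = s * ‖(1 - (t:ℂ) * w) ^ (-(s:ℂ) - 1)‖ * ‖w‖ := by
        rw [norm_mul, norm_mul, norm_neg, norm_neg, Complex.norm_real, Real.norm_eq_abs,
          _root_.abs_of_nonneg hs0.le]
    _ ≤ s * (1 - t * ‖w‖) ^ (-s - 1) * ‖w‖ := by
        apply mul_le_mul_of_nonneg_right _ hw0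
        exact mul_le_mul_of_nonneg_left h1 hs0.le
    _ = s * ‖w‖ * (1 - t * ‖w‖) ^ (-s - 1) := by ring

lemma main_bound {s : ℝ} (hs0 : 0 < s) {g : ℂ → ℂ} (hg : CHyp s g) {M : ℝ}
    (hM : ∀ r : ℝ, 0 < r → r < 1 → (1 - r^2) * ((1-r)^(-s) - 1) / r ≤ M) :
    ∀ x ∈ preSchwarzianSet g, x ≤ M := by
  obtain ⟨hd, hg0, hg1, hgne, ω, hωd, hω0, hωlt, hsub⟩ := hg
  have hschwarz : ∀ z ∈ ball (0:ℂ) 1, ‖ω z‖ ≤ ‖z‖ := by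
    intro z hz
    have := Complex.norm_le_norm_of_mapsTo_ball hωd
      (fun w hw => mem_closedBall_zero_iff.2 (hωlt w hw).le) hω0
      (mem_ball_zero_iff.1 hz)
    simpa using this
  have hpt : ∀ z ∈ ball (0:ℂ) 1, z ≠ 0 →
      (1 - ‖z‖^2) * ‖deriv (deriv g) z / deriv g z‖ ≤ M := by
    intro z hz hz0
    have hzn : ‖z‖ < 1 := mem_ball_zero_iff.1 hz
    have hzn0 : 0 < ‖z‖ := norm_pos_iff.2 hz0
    have hid := hsub z hz
    have hzA : z * (deriv (deriv g) z / deriv g z) = (1 - ω z) ^ (-((s:ℝ):ℂ)) - 1 := by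
      rw [← mul_div_assoc]
      exact eq_sub_of_add_eq' hid
    have hnorm : ‖z‖ * ‖deriv (deriv g) z / deriv g z‖ = ‖(1 - ω z) ^ (-((s:ℝ):ℂ)) - 1‖ := by
      rw [← norm_mul, hzA]
    have hstep1 : ‖(1 - ω z) ^ (-((s:ℝ):ℂ)) - 1‖ ≤ (1 - ‖ω z‖)^(-s) - 1 :=
      key_ineq_s14 hs0 (hωlt z hz)
    have hstep2 : (1 - ‖ω z‖)^(-s) ≤ (1 - ‖z‖)^(-s) := by
      apply Real.rpow_le_rpow_of_nonpos (by linarith) (by linarith [hschwarz z hz]) (by linarith)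
    have hA : ‖deriv (deriv g) z / deriv g z‖ ≤ ((1-‖z‖)^(-s) - 1) / ‖z‖ := by
      rw [le_div_iff₀ hzn0]
      calc ‖deriv (deriv g) z / deriv g z‖ * ‖z‖
          = ‖z‖ * ‖deriv (deriv g) z / deriv g z‖ := by ring
        _ = ‖(1 - ω z) ^ (-((s:ℝ):ℂ)) - 1‖ := hnorm
        _ ≤ (1-‖z‖)^(-s) - 1 := le_trans hstep1 (by linarith)
    calc (1 - ‖z‖^2) * ‖deriv (deriv g) z / deriv g z‖
        ≤ (1 - ‖z‖^2) * (((1-‖z‖)^(-s) - 1) / ‖z‖) := by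
          apply mul_le_mul_of_nonneg_left hA
          nlinarith
      _ = (1 - ‖z‖^2) * ((1-‖z‖)^(-s) - 1) / ‖z‖ := by ring
      _ ≤ M := hM ‖z‖ hzn0 hzn
  rintro x ⟨z, hz, rfl⟩
  by_cases hz0 : z = 0
  · subst hz0
    -- continuity argument
    have hga : AnalyticOnNhd ℂ g (ball 0 1) := hd.analyticOnNhd isOpen_ball
    have h0b : (0:ℂ) ∈ ball (0:ℂ) 1 := mem_ball_self one_pos
    have hAc : ContinuousAt (fun z : ℂ => deriv (deriv g) z / deriv g z) 0 := by
      apply ContinuousAt.div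
      · exact ((hga.deriv.deriv) 0 h0b).continuousAt
      · exact ((hga.deriv) 0 h0b).continuousAt
      · rw [hg1]; exact one_ne_zero
    set u : ℝ → ℝ := fun t =>
      (1 - ‖((t:ℝ):ℂ)‖^2) * ‖deriv (deriv g) ((t:ℝ):ℂ) / deriv g ((t:ℝ):ℂ)‖ with hu_def
    have hu : ContinuousAt u 0 := by
      apply ContinuousAt.mul
      · exact (continuousAt_const.sub
          ((Complex.continuous_ofReal.norm.pow 2).continuousAt))
      · have : ContinuousAt (fun t : ℝ => deriv (deriv g) ((t:ℝ):ℂ) / deriv g ((t:ℝ):ℂ)) 0 := by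
          have h2 : ContinuousAt (fun t : ℝ => ((t:ℝ):ℂ)) 0 := Complex.continuous_ofReal.continuousAt
          exact ContinuousAt.comp (x := (0:ℝ)) (f := fun t : ℝ => ((t:ℝ):ℂ))
            (by simpa using hAc) h2
        exact this.norm
    have hev : ∀ᶠ t in nhdsWithin (0:ℝ) (Ioi 0), u t ≤ M := by
      filter_upwards [Ioo_mem_nhdsGT_of_mem (⟨le_refl (0:ℝ), one_pos⟩ : (0:ℝ) ∈ Ico (0:ℝ) 1)]
        with t ht
      have htb : ((t:ℝ):ℂ) ∈ ball (0:ℂ) 1 := by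
        rw [mem_ball_zero_iff, Complex.norm_real, Real.norm_eq_abs, _root_.abs_of_nonneg ht.1.le]
        exact ht.2
      have htne : ((t:ℝ):ℂ) ≠ 0 := by
        simpa using ht.1.ne'
      exact hpt _ htb htne
    have := le_of_tendsto (hu.continuousWithinAt (s := Ioi (0:ℝ))) hev
    simpa [hu_def] using this
  · exact hpt z hz hz0

lemma exists_extremal {s : ℝ} (hs0 : 0 < s) :
    ∃ g : ℂ → ℂ, CHyp s g ∧
      ∀ r : ℝ, 0 < r → r < 1 →
        ((1 - r^2) * ((1-r)^(-s) - 1) / r) ∈ preSchwarzianSet g := by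
  set b : ℂ → ℂ := fun z => (1 - z) ^ (-((s:ℝ):ℂ)) with hbdef
  have hslit : ∀ z ∈ ball (0:ℂ) 1, (1 - z) ∈ Complex.slitPlane := by
    intro z hz
    rw [sub_eq_add_neg]
    exact Complex.mem_slitPlane_of_norm_lt_one (by simpa using mem_ball_zero_iff.1 hz)
  have hb : DifferentiableOn ℂ b (ball 0 1) := by
    intro z hz
    have h1 : HasDerivAt (fun z : ℂ => 1 - z) (-1) z := (hasDerivAt_id z).const_sub 1
    exact ((h1.cpow_const (hslit z hz)).differentiableAt).differentiableWithinAt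
  set q : ℂ → ℂ := dslope b 0 with hqdef
  have hq : DifferentiableOn ℂ q (ball 0 1) :=
    (Complex.differentiableOn_dslope (ball_mem_nhds 0 one_pos)).2 hb
  have hb0 : b 0 = 1 := by rw [hbdef]; simp [Complex.one_cpow]
  have hqval : ∀ z : ℂ, z ≠ 0 → q z = ((1 - z) ^ (-((s:ℝ):ℂ)) - 1) / z := by
    intro z hz0
    rw [hqdef, dslope_of_ne b hz0, slope_def_field, hb0]
    simp [hbdef]
  obtain ⟨Q, hQ0, hQ⟩ := exists_primitive hq
  set p : ℂ → ℂ := fun z => Complex.exp (Q z) with hpdef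
  have hp : ∀ z ∈ ball (0:ℂ) 1, HasDerivAt p (Complex.exp (Q z) * q z) z := by
    intro z hz
    exact (hQ z hz).cexp
  have hpne : ∀ z : ℂ, p z ≠ 0 := fun z => Complex.exp_ne_zero _
  have hpd : DifferentiableOn ℂ p (ball 0 1) :=
    fun z hz => ((hp z hz).differentiableAt).differentiableWithinAt
  obtain ⟨g, hg0, hg⟩ := exists_primitive hpd
  have hderiv : ∀ z ∈ ball (0:ℂ) 1, deriv g z = p z := fun z hz => (hg z hz).deriv
  have hderiv2 : ∀ z ∈ ball (0:ℂ) 1, deriv (deriv g) z = Complex.exp (Q z) * q z := by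
    intro z hz
    have hev : deriv g =ᶠ[nhds z] p :=
      Filter.eventuallyEq_of_mem (isOpen_ball.mem_nhds hz) hderiv
    rw [hev.deriv_eq]
    exact (hp z hz).deriv
  have hAq : ∀ z ∈ ball (0:ℂ) 1, deriv (deriv g) z / deriv g z = q z := by
    intro z hz
    rw [hderiv2 z hz, hderiv z hz, hpdef]
    exact mul_div_cancel_left₀ _ (Complex.exp_ne_zero _)
  have h0b : (0:ℂ) ∈ ball (0:ℂ) 1 := mem_ball_self one_pos
  refine ⟨g, ⟨fun z hz => ((hg z hz).differentiableAt).differentiableWithinAt, hg0, ?_, ?_, ?_⟩, ?_⟩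
  · rw [hderiv 0 h0b]; simp [hpdef, hQ0]
  · intro z hz; rw [hderiv z hz]; exact hpne z
  · refine ⟨id, differentiableOn_id, rfl, fun z hz => by simpa using mem_ball_zero_iff.1 hz, ?_⟩
    intro z hz
    rw [mul_div_assoc, hAq z hz]
    by_cases hz0 : z = 0
    · subst hz0
      simp [Complex.one_cpow]
    · rw [hqval z hz0, id]
      field_simp
      ring
  · intro r hr0 hr1
    have hz : ((r:ℝ):ℂ) ∈ ball (0:ℂ) 1 := by
      rw [mem_ball_zero_iff, Complex.norm_real, Real.norm_eq_abs, _root_.abs_of_nonneg hr0.le]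
      exact hr1
    refine ⟨((r:ℝ):ℂ), hz, ?_⟩
    rw [hAq _ hz, hqval _ (by simpa using hr0.ne')]
    have hcast : (1 : ℂ) - ((r:ℝ):ℂ) = (((1 - r : ℝ)):ℂ) := by push_cast; ring
    have hcpow : ((((1 - r : ℝ)):ℂ)) ^ (-((s:ℝ):ℂ)) = ((((1-r)^(-s) : ℝ)):ℂ) := by
      rw [show -((s:ℝ):ℂ) = (((-s : ℝ)):ℂ) by push_cast; ring]
      rw [← Complex.ofReal_cpow (by linarith)]
    rw [hcast, hcpow]
    have : ((((1-r)^(-s) : ℝ)):ℂ) - 1 = (((((1-r)^(-s) - 1) : ℝ)):ℂ) := by push_cast; ring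
    rw [this]
    rw [show (((((1-r)^(-s) - 1) : ℝ)):ℂ) / ((r:ℝ):ℂ) = (((((1-r)^(-s) - 1)/r : ℝ)):ℂ) by push_cast; ring]
    rw [Complex.norm_real, Complex.norm_real, Real.norm_eq_abs, Real.norm_eq_abs,
      _root_.abs_of_nonneg hr0.le,
      _root_.abs_of_nonneg (div_nonneg (by
        have hge : (1:ℝ) ≤ (1-r)^(-s) :=
          Real.one_le_rpow_of_pos_of_le_one_of_nonpos (by linarith) (by linarith) (by linarith)
        linarith : (0:ℝ) ≤ (1-r)^(-s) - 1) hr0.le)]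
    ring

end Aux

theorem stmt14 (s : ℝ) (hs0 : 0 < s) (hs1 : s ≤ 1) :
    (s = 1 →
      (∀ g : ℂ → ℂ, CHyp s g → ∀ x ∈ preSchwarzianSet g, x ≤ 2) ∧
      (∃ g : ℂ → ℂ, CHyp s g ∧ sSup (preSchwarzianSet g) = 2)) ∧
    (s < 1 → ∀ rs : ℝ, rs ∈ Ioo (0:ℝ) 1 →
      rs^2*(1-rs)^s + rs^2*s - rs^2 + (1-rs)^s + rs*s - 1 = 0 →
      (∀ t ∈ Ioo (0:ℝ) 1,
        t^2*(1-t)^s + t^2*s - t^2 + (1-t)^s + t*s - 1 = 0 → t = rs) →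
      (∀ g : ℂ → ℂ, CHyp s g → ∀ x ∈ preSchwarzianSet g,
        x ≤ ((1+rs)*(1-rs)^(1-s) - (1-rs^2))/rs) ∧
      (∃ g : ℂ → ℂ, CHyp s g ∧
        sSup (preSchwarzianSet g) = ((1+rs)*(1-rs)^(1-s) - (1-rs^2))/rs)) := by
  constructor
  · intro hseq
    subst hseq
    have e1 : ∀ r : ℝ, 0 < r → r < 1 →
        (1 - r^2) * ((1-r)^(-(1:ℝ)) - 1) / r = 1 + r := by
      intro r h0 h1
      have h1r : (1:ℝ) - r ≠ 0 := by intro h; nlinarith [h]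
      rw [Real.rpow_neg_one]
      field_simp
      ring
    have hM2 : ∀ r : ℝ, 0 < r → r < 1 → (1 - r^2) * ((1-r)^(-(1:ℝ)) - 1) / r ≤ 2 := by
      intro r h0 h1
      rw [e1 r h0 h1]; linarith
    constructor
    · intro g hg x hx
      exact main_bound one_pos hg hM2 x hx
    · obtain ⟨g, hg, hmem⟩ := exists_extremal (s := 1) one_pos
      refine ⟨g, hg, ?_⟩
      have hub : ∀ x ∈ preSchwarzianSet g, x ≤ 2 := main_bound one_pos hg hM2
      have hmem' : ∀ r : ℝ, 0 < r → r < 1 → (1 + r) ∈ preSchwarzianSet g := by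
        intro r h0 h1
        have := hmem r h0 h1
        rwa [e1 r h0 h1] at this
      apply le_antisymm
      · exact csSup_le ⟨1 + 1/2, hmem' (1/2) (by norm_num) (by norm_num)⟩ hub
      · apply le_of_forall_lt
        intro w hw
        set r : ℝ := (1 + max (w-1) 0)/2 with hrdef
        have hmax0 : (0:ℝ) ≤ max (w-1) 0 := le_max_right _ _
        have hmax1 : max (w-1) 0 < 1 := by
          apply max_lt (by linarith) one_pos
        have h0 : 0 < r := by rw [hrdef]; linarith
        have h1 : r < 1 := by rw [hrdef]; linarith
        have hwr : w < 1 + r := by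
          rcases le_total w 1 with h | h
          · linarith
          · have : max (w-1) 0 = w - 1 := max_eq_left (by linarith)
            rw [hrdef, this]; linarith
        calc w < 1 + r := hwr
          _ ≤ sSup (preSchwarzianSet g) := le_csSup ⟨2, hub⟩ (hmem' r h0 h1)
  · intro hslt rs hrs hroot huniq
    have huniq' : ∀ t ∈ Ioo (0:ℝ) 1, ph s t = 0 → t = rs := by
      intro t ht h
      exact huniq t ht (by rw [← ph_eq]; exact h)
    have h1rs : (0:ℝ) < 1 - rs := by linarith [hrs.2]
    have hMval : hh s rs = ((1+rs)*(1-rs)^(1-s) - (1-rs^2))/rs := by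
      have e : (1-rs)^(1-s) = (1-rs) * (1-rs)^(-s) := by
        rw [show (1:ℝ)-s = 1 + -s by ring, Real.rpow_add h1rs, Real.rpow_one]
      unfold hh
      rw [e, div_eq_div_iff (ne_of_gt hrs.1) (ne_of_gt hrs.1)]
      ring
    have hM : ∀ r : ℝ, 0 < r → r < 1 →
        (1 - r^2) * ((1-r)^(-s) - 1) / r ≤ ((1+rs)*(1-rs)^(1-s) - (1-rs^2))/rs := by
      intro r h0 h1
      have := hh_le_hh_rs hs0 hslt hrs huniq' r ⟨h0, h1⟩
      rw [hMval] at this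
      exact this
    constructor
    · intro g hg x hx
      exact main_bound hs0 hg hM x hx
    · obtain ⟨g, hg, hmem⟩ := exists_extremal hs0
      refine ⟨g, hg, ?_⟩
      have hub := main_bound hs0 hg hM
      apply IsGreatest.csSup_eq
      constructor
      · have hm := hmem rs hrs.1 hrs.2
        have heq : (1 - rs^2) * ((1-rs)^(-s) - 1) / rs
            = ((1+rs)*(1-rs)^(1-s) - (1-rs^2))/rs := hMval
        rwa [heq] at hm
      · exact hub
end

section
/- Let f_3(z) = ∫_0^z exp(2st + (s^2/2) t^2) dt for 0 < s ≤ 1/√2. Then f_3''(z)/f_3'(z) = 2s + s^2 z, and the pre-Schwarzian norm of f_3 equals 2(√(3s^2+4)+4)(3s^2 + 2√(3s^2+4) - 4)/(27s), with the supremum of (1-|z|^2)|2s + s^2 z| over the unit disk attained on the positive real axis. -/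
open Real Set Metric

lemma aux_q (s : ℝ) (hs0 : 0 < s) :
    (Real.sqrt (3*s^2+4))^2 = 3*s^2+4 ∧ 2 ≤ Real.sqrt (3*s^2+4) ∧
    Real.sqrt (3*s^2+4) < 3*s + 2 := by
  have h1 : (Real.sqrt (3*s^2+4))^2 = 3*s^2+4 := Real.sq_sqrt (by positivity)
  have h0 : 0 ≤ Real.sqrt (3*s^2+4) := Real.sqrt_nonneg _
  refine ⟨h1, by nlinarith, by nlinarith⟩

lemma aux_bound (s r : ℝ) (hs0 : 0 < s) (hr : 0 ≤ r) :
    (1 - r^2) * (2*s + s^2*r)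
      ≤ 2*(Real.sqrt (3*s^2 + 4) + 4)*(3*s^2 + 2*Real.sqrt (3*s^2 + 4) - 4)/(27*s) := by
  obtain ⟨hq2, hq4, _⟩ := aux_q s hs0
  set q := Real.sqrt (3*s^2+4) with hq
  rw [le_div_iff₀ (by positivity)]
  have key : 2*(q+4)*(3*s^2+2*q-4) - 27*s*((1-r^2)*(2*s+s^2*r))
      = (3*s*r-q+2)^2*(3*s*r+2*q+2) := by
    linear_combination (9*s*r - 2*q + 10) * hq2
  nlinarith [mul_nonneg (sq_nonneg (3*s*r - q + 2)) (show (0:ℝ) ≤ 3*s*r + 2*q + 2 by nlinarith)]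

lemma aux_eq (s : ℝ) (hs0 : 0 < s) :
    (1 - ((Real.sqrt (3*s^2+4)-2)/(3*s))^2) * (2*s + s^2*((Real.sqrt (3*s^2+4)-2)/(3*s)))
      = 2*(Real.sqrt (3*s^2 + 4) + 4)*(3*s^2 + 2*Real.sqrt (3*s^2 + 4) - 4)/(27*s) := by
  obtain ⟨hq2, hq4, _⟩ := aux_q s hs0
  set q := Real.sqrt (3*s^2+4) with hq
  have hs' : s ≠ 0 := ne_of_gt hs0
  field_simp
  linear_combination (-27*(q+4)) * hq2

theorem stmt18 (s : ℝ) (hs0 : 0 < s) (hs1 : s ≤ 1 / Real.sqrt 2)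
    (f₃ : ℂ → ℂ) (hf0 : f₃ 0 = 0)
    (hderiv : ∀ z : ℂ, HasDerivAt f₃ (Complex.exp (2*(s:ℂ)*z + (s:ℂ)^2/2*z^2)) z) :
    (∀ z : ℂ, deriv (deriv f₃) z / deriv f₃ z = 2*(s:ℂ) + (s:ℂ)^2*z) ∧
    sSup {x : ℝ | ∃ z ∈ ball (0:ℂ) 1,
        x = (1 - ‖z‖^2) * ‖deriv (deriv f₃) z / deriv f₃ z‖}
      = 2*(Real.sqrt (3*s^2 + 4) + 4)*(3*s^2 + 2*Real.sqrt (3*s^2 + 4) - 4)/(27*s) ∧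
    sSup {x : ℝ | ∃ r : ℝ, 0 ≤ r ∧ r < 1 ∧ x = (1 - r^2) * |2*s + s^2*r|}
      = 2*(Real.sqrt (3*s^2 + 4) + 4)*(3*s^2 + 2*Real.sqrt (3*s^2 + 4) - 4)/(27*s) := by
  obtain ⟨hq2, hq4, hqlt⟩ := aux_q s hs0
  set q := Real.sqrt (3*s^2+4) with hq
  set M := 2*(q + 4)*(3*s^2 + 2*q - 4)/(27*s) with hM
  have hMpos : 0 < M := by
    rw [hM]; apply div_pos; nlinarith; positivity
  -- Part 1
  have hd1 : deriv f₃ = fun z => Complex.exp (2*(s:ℂ)*z + (s:ℂ)^2/2*z^2) :=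
    funext fun z => (hderiv z).deriv
  have hinner : ∀ z : ℂ, HasDerivAt (fun z : ℂ => 2*(s:ℂ)*z + (s:ℂ)^2/2*z^2)
      (2*(s:ℂ) + (s:ℂ)^2*z) z := by
    intro z
    have h1 : HasDerivAt (fun z : ℂ => 2*(s:ℂ)*z) (2*(s:ℂ)) z := by
      simpa using (hasDerivAt_id z).const_mul (2*(s:ℂ))
    have h2 : HasDerivAt (fun z : ℂ => (s:ℂ)^2/2*z^2) ((s:ℂ)^2/2*(2*z)) z := by
      simpa using (hasDerivAt_pow 2 z).const_mul ((s:ℂ)^2/2)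
    have := h1.add h2
    exact this.congr_deriv (by ring)
  have hd2 : ∀ z : ℂ, deriv (deriv f₃) z
      = (2*(s:ℂ) + (s:ℂ)^2*z) * Complex.exp (2*(s:ℂ)*z + (s:ℂ)^2/2*z^2) := by
    intro z
    rw [hd1]
    have : HasDerivAt (fun z : ℂ => Complex.exp (2*(s:ℂ)*z + (s:ℂ)^2/2*z^2))
        (Complex.exp (2*(s:ℂ)*z + (s:ℂ)^2/2*z^2) * (2*(s:ℂ) + (s:ℂ)^2*z)) z :=
      (hinner z).cexp
    rw [this.deriv]; ring
  have part1 : ∀ z : ℂ, deriv (deriv f₃) z / deriv f₃ z = 2*(s:ℂ) + (s:ℂ)^2*z := by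
    intro z
    rw [hd2, hd1]
    exact mul_div_cancel_right₀ _ (Complex.exp_ne_zero _)
  -- norm computation
  have hnorm : ∀ z : ℂ, ‖2*(s:ℂ) + (s:ℂ)^2*z‖ ≤ 2*s + s^2*‖z‖ := by
    intro z
    calc ‖2*(s:ℂ) + (s:ℂ)^2*z‖ ≤ ‖2*(s:ℂ)‖ + ‖(s:ℂ)^2*z‖ := norm_add_le _ _
    _ = |2*s| + s^2*‖z‖ := by
        rw [norm_mul, norm_mul, norm_pow, Complex.norm_real]
        simp [abs_of_pos hs0, abs_mul, sq_abs]
    _ = 2*s + s^2*‖z‖ := by rw [abs_of_pos (by linarith)]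
  -- r₀
  set r₀ := (q - 2)/(3*s) with hr₀
  have hr₀0 : 0 ≤ r₀ := by apply div_nonneg; linarith; positivity
  have hr₀1 : r₀ < 1 := by rw [div_lt_one (by positivity)]; linarith
  have hval : (1 - r₀^2) * (2*s + s^2*r₀) = M := aux_eq s hs0
  have h2pos : ∀ r : ℝ, 0 ≤ r → 0 < 2*s + s^2*r := by intro r hr; positivity
  constructor
  · exact part1
  constructor
  · -- second part
    have hset : {x : ℝ | ∃ z ∈ ball (0:ℂ) 1,
        x = (1 - ‖z‖^2) * ‖deriv (deriv f₃) z / deriv f₃ z‖}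
        = {x : ℝ | ∃ z ∈ ball (0:ℂ) 1, x = (1 - ‖z‖^2) * ‖2*(s:ℂ) + (s:ℂ)^2*z‖} := by
      simp only [part1]
    rw [hset]
    have hub : ∀ x ∈ {x : ℝ | ∃ z ∈ ball (0:ℂ) 1, x = (1 - ‖z‖^2) * ‖2*(s:ℂ) + (s:ℂ)^2*z‖},
        x ≤ M := by
      rintro x ⟨z, hz, rfl⟩
      rw [mem_ball_zero_iff] at hz
      have h1 : (1 - ‖z‖^2) * ‖2*(s:ℂ) + (s:ℂ)^2*z‖ ≤ (1 - ‖z‖^2) * (2*s + s^2*‖z‖) := by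
        apply mul_le_mul_of_nonneg_left (hnorm z)
        nlinarith [norm_nonneg z]
      exact h1.trans (aux_bound s ‖z‖ hs0 (norm_nonneg z))
    apply le_antisymm
    · exact Real.sSup_le hub hMpos.le
    · apply le_csSup ⟨M, hub⟩
      refine ⟨(r₀ : ℂ), ?_, ?_⟩
      · rw [mem_ball_zero_iff, Complex.norm_real, Real.norm_eq_abs, abs_of_nonneg hr₀0]; exact hr₀1
      · rw [Complex.norm_real, Real.norm_eq_abs, abs_of_nonneg hr₀0]
        have : (2*(s:ℂ) + (s:ℂ)^2*(r₀:ℂ)) = ((2*s + s^2*r₀ : ℝ) : ℂ) := by push_cast; ring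
        rw [this, Complex.norm_real, Real.norm_eq_abs, abs_of_pos (h2pos r₀ hr₀0), ← hval]
  · -- third part
    have hub : ∀ x ∈ {x : ℝ | ∃ r : ℝ, 0 ≤ r ∧ r < 1 ∧ x = (1 - r^2) * |2*s + s^2*r|},
        x ≤ M := by
      rintro x ⟨r, hr0, hr1, rfl⟩
      rw [abs_of_pos (h2pos r hr0)]
      exact aux_bound s r hs0 hr0
    apply le_antisymm
    · exact Real.sSup_le hub hMpos.le
    · apply le_csSup ⟨M, hub⟩
      exact ⟨r₀, hr₀0, hr₀1, by rw [abs_of_pos (h2pos r₀ hr₀0), hval]⟩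
end
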